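/- arXiv:0802.1266 — 6 statements merged into one kernel-verified Lean document; each statement's English description precedes it below -/
import Mathlib

section
/- Let m, n, u, v be integers and p a prime with 0 < m < n, gcd(m, n) = 1, gcd(p, n) = 1 and u ≤ v. For each positive integer i, let k_i be the unique integer with 1 ≤ k_i ≤ p^i and k_i·n ≡ m (mod p^i). Then the p-adic valuation of the product ∏_{j=u}^{v} (nj − m) equals Σ_{i=1}^{∞} (⌊(v − k_i)/p^i⌋ − ⌊(u − 1 − k_i)/p^i⌋), and this also equals Σ_{i=1}^{∞} (⌊(−u + k_i)/p^i⌋ − ⌊(−v − 1 + k_i)/p^i⌋). -/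
private lemma le_floor_div_iff (q : ℤ) (hq : 0 < q) (x t : ℤ) :
    t ≤ ⌊(x : ℚ) / (q : ℚ)⌋ ↔ q * t ≤ x := by
  have hq' : (0 : ℚ) < (q : ℚ) := by exact_mod_cast hq
  rw [Int.le_floor, le_div_iff₀ hq', mul_comm]
  exact_mod_cast Iff.rfl

private lemma card_dvd_filter (q kk w1 w2 : ℤ) (hq : 0 < q) (hw : w1 ≤ w2 + 1) :
    ((((Finset.Icc w1 w2).filter (fun j => q ∣ j - kk)).card : ℤ))
      = ⌊((w2 - kk : ℤ) : ℚ) / (q : ℚ)⌋ - ⌊((w1 - 1 - kk : ℤ) : ℚ) / (q : ℚ)⌋ := by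
  set a : ℤ := ⌊((w1 - 1 - kk : ℤ) : ℚ) / (q : ℚ)⌋ with ha
  set b : ℤ := ⌊((w2 - kk : ℤ) : ℚ) / (q : ℚ)⌋ with hb
  have hqa : q * a ≤ w1 - 1 - kk := (le_floor_div_iff q hq _ a).mp le_rfl
  have hab : a ≤ b := (le_floor_div_iff q hq _ a).mpr (by omega)
  have hcard : ((Finset.Icc w1 w2).filter (fun j => q ∣ j - kk)).card
      = (Finset.Ioc a b).card := by
    refine Finset.card_bij' (fun j _ => (j - kk) / q) (fun t _ => kk + q * t) ?_ ?_ ?_ ?_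
    · intro j hj
      simp only [Finset.mem_filter, Finset.mem_Icc] at hj
      obtain ⟨⟨hj1, hj2⟩, hjd⟩ := hj
      have hmul : q * ((j - kk) / q) = j - kk := Int.mul_ediv_cancel' hjd
      simp only [Finset.mem_Ioc]
      constructor
      · by_contra hcon
        push_neg at hcon
        have := (le_floor_div_iff q hq (w1 - 1 - kk) ((j - kk) / q)).mp (by omega)
        omega
      · exact (le_floor_div_iff q hq (w2 - kk) _).mpr (by omega)
    · intro t ht
      simp only [Finset.mem_Ioc] at ht
      have h1 : q * t ≤ w2 - kk := (le_floor_div_iff q hq _ t).mp ht.2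
      have h2 : ¬ (q * t ≤ w1 - 1 - kk) := fun h =>
        absurd ((le_floor_div_iff q hq _ t).mpr h) (by omega)
      simp only [Finset.mem_filter, Finset.mem_Icc]
      refine ⟨⟨by omega, by omega⟩, ⟨t, by ring⟩⟩
    · intro j hj
      simp only [Finset.mem_filter] at hj
      have hmul : q * ((j - kk) / q) = j - kk := Int.mul_ediv_cancel' hj.2
      try dsimp only
      omega
    · intro t _
      try dsimp only
      have : kk + q * t - kk = q * t := by ring
      rw [this, Int.mul_ediv_cancel_left _ hq.ne']
  rw [hcard, Int.card_Ioc]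
  omega

private lemma card_neg (q kk w1 w2 : ℤ) :
    ((Finset.Icc w1 w2).filter (fun j => q ∣ j - kk)).card
      = ((Finset.Icc (-w2) (-w1)).filter (fun j => q ∣ j - (-kk))).card := by
  refine Finset.card_bij' (fun j _ => -j) (fun j _ => -j) ?_ ?_ ?_ ?_
  · intro j hj
    simp only [Finset.mem_filter, Finset.mem_Icc] at hj ⊢
    refine ⟨⟨by omega, by omega⟩, ?_⟩
    have : -j - -kk = -(j - kk) := by ring
    rw [this]
    exact (dvd_neg).mpr hj.2
  · intro j hj
    simp only [Finset.mem_filter, Finset.mem_Icc] at hj ⊢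
    refine ⟨⟨by omega, by omega⟩, ?_⟩
    have : -j - kk = -(j - -kk) := by ring
    rw [this]
    exact (dvd_neg).mpr hj.2
  · intro j _; (try dsimp only); omega
  · intro j _; (try dsimp only); omega

private lemma padicValInt_prod {ι : Type*} (p : ℕ) [hp : Fact p.Prime] (s : Finset ι)
    (f : ι → ℤ) (h : ∀ i ∈ s, f i ≠ 0) :
    padicValInt p (∏ i ∈ s, f i) = ∑ i ∈ s, padicValInt p (f i) := by
  induction s using Finset.cons_induction with
  | empty => simp [padicValInt]
  | cons a s ha ih =>
    rw [Finset.prod_cons, Finset.sum_cons,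
      padicValInt.mul (h a (Finset.mem_cons_self a s))
        (Finset.prod_ne_zero_iff.mpr fun i hi => h i (Finset.mem_cons_of_mem hi)),
      ih fun i hi => h i (Finset.mem_cons_of_mem hi)]

private lemma val_as_sum (p : ℕ) [hp : Fact p.Prime] (x : ℤ) (hx : x ≠ 0) {B : ℕ}
    (hB : padicValInt p x ≤ B) :
    padicValInt p x = ∑ i ∈ Finset.range B, if (p : ℤ) ^ (i + 1) ∣ x then 1 else 0 := by
  have hiff : ∀ i : ℕ, ((p : ℤ) ^ (i + 1) ∣ x) ↔ i < padicValInt p x := by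
    intro i
    rw [padicValInt_dvd_iff]
    constructor
    · rintro (h | h); · exact absurd h hx
      omega
    · intro h; exact Or.inr (by omega)
  simp_rw [hiff]
  rw [← Finset.card_filter]
  have : (Finset.range B).filter (fun i => i < padicValInt p x)
      = Finset.range (padicValInt p x) := by
    ext i
    simp only [Finset.mem_filter, Finset.mem_range]
    omega
  rw [this, Finset.card_range]

/-- Let `m, n, u, v` be integers and `p` a prime with `0 < m < n`,
`gcd(m,n) = gcd(p,n) = 1` and `u ≤ v`. For each `i ≥ 1` let `k_i` be the
unique integer with `1 ≤ k_i ≤ p^i` and `k_i·n ≡ m (mod p^i)`. Then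
`v_p(∏_{j=u}^{v} (nj − m)) = ∑_{i≥1} (⌊(v − k_i)/p^i⌋ − ⌊(u − 1 − k_i)/p^i⌋)
= ∑_{i≥1} (⌊(−u + k_i)/p^i⌋ − ⌊(−v − 1 + k_i)/p^i⌋)`. -/
theorem padicVal_prod_linear (m n u v : ℤ) (p : ℕ) (hp : p.Prime)
    (hm : 0 < m) (hmn : m < n) (hgcd : Int.gcd m n = 1)
    (hpn : Int.gcd (p : ℤ) n = 1) (huv : u ≤ v)
    (k : ℕ → ℤ)
    (hk : ∀ i : ℕ, 0 < i → 1 ≤ k i ∧ k i ≤ (p : ℤ) ^ i ∧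
      k i * n ≡ m [ZMOD ((p : ℤ) ^ i)]) :
    ((padicValInt p (∏ j ∈ Finset.Icc u v, (n * j - m)) : ℤ) =
      ∑' i : ℕ, (⌊((v : ℚ) - (k (i + 1) : ℚ)) / (p : ℚ) ^ (i + 1)⌋ -
        ⌊((u : ℚ) - 1 - (k (i + 1) : ℚ)) / (p : ℚ) ^ (i + 1)⌋)) ∧
    ((padicValInt p (∏ j ∈ Finset.Icc u v, (n * j - m)) : ℤ) =
      ∑' i : ℕ, (⌊(-(u : ℚ) + (k (i + 1) : ℚ)) / (p : ℚ) ^ (i + 1)⌋ -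
        ⌊(-(v : ℚ) - 1 + (k (i + 1) : ℚ)) / (p : ℚ) ^ (i + 1)⌋)) := by
  haveI : Fact p.Prime := ⟨hp⟩
  have hq : ∀ i : ℕ, (0 : ℤ) < (p : ℤ) ^ i := fun i =>
    pow_pos (by exact_mod_cast hp.pos) i
  -- the factors are nonzero
  have hne : ∀ j ∈ Finset.Icc u v, n * j - m ≠ 0 := by
    intro j _ h0
    have hd : n ∣ m := ⟨j, by linarith⟩
    have := Int.le_of_dvd hm hd
    omega
  set P : ℤ := ∏ j ∈ Finset.Icc u v, (n * j - m) with hPdef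
  have hP : P ≠ 0 := Finset.prod_ne_zero_iff.mpr hne
  set V : ℕ := padicValInt p P with hVdef
  set B : ℕ := V + 1 with hBdef
  -- coprimality
  have hcop : ∀ i : ℕ, IsCoprime ((p : ℤ) ^ i) n := fun i =>
    (Int.isCoprime_iff_gcd_eq_one.mpr hpn).pow_left
  -- congruence condition rewrite
  have hcond : ∀ i : ℕ, 0 < i → ∀ j : ℤ,
      ((p : ℤ) ^ i ∣ n * j - m ↔ (p : ℤ) ^ i ∣ j - k i) := by
    intro i hi j
    obtain ⟨h1, h2, h3⟩ := hk i hi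
    have hd : (p : ℤ) ^ i ∣ (k i * n - m) := h3.symm.dvd
    constructor
    · intro h
      have hnd : (p : ℤ) ^ i ∣ n * (j - k i) := by
        have e : n * (j - k i) = (n * j - m) - (k i * n - m) := by ring
        rw [e]; exact dvd_sub h hd
      exact (hcop i).dvd_of_dvd_mul_left hnd
    · intro h
      have e : n * j - m = n * (j - k i) + (k i * n - m) := by ring
      rw [e]
      exact dvd_add (h.mul_left n) hd
  -- the counting function
  set c : ℕ → ℕ := fun i =>
    ((Finset.Icc u v).filter (fun j => (p : ℤ) ^ i ∣ n * j - m)).card with hcdef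
  -- valuations are bounded by V
  have hval : ∀ j ∈ Finset.Icc u v, padicValInt p (n * j - m) ≤ V := by
    intro j hj
    have h1 : (p : ℤ) ^ (padicValInt p (n * j - m)) ∣ n * j - m := padicValInt_dvd _
    have h2 : (n * j - m) ∣ P := Finset.dvd_prod_of_mem _ hj
    have := (padicValInt_dvd_iff _ P).mp (h1.trans h2)
    exact this.resolve_left hP
  -- V as a finite double sum
  have key1 : V = ∑ i ∈ Finset.range B, c (i + 1) := by
    have e1 : V = ∑ j ∈ Finset.Icc u v, padicValInt p (n * j - m) :=
      padicValInt_prod p _ _ hne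
    rw [e1]
    have e2 : ∀ j ∈ Finset.Icc u v, padicValInt p (n * j - m)
        = ∑ i ∈ Finset.range B, if (p : ℤ) ^ (i + 1) ∣ n * j - m then 1 else 0 := by
      intro j hj
      exact val_as_sum p _ (hne j hj) (le_trans (hval j hj) (by omega))
    rw [Finset.sum_congr rfl e2, Finset.sum_comm]
    apply Finset.sum_congr rfl
    intro i _
    rw [hcdef, ← Finset.card_filter]
  -- counts vanish for large i
  have hzero : ∀ i : ℕ, B ≤ i → c (i + 1) = 0 := by
    intro i hi
    rw [hcdef]
    simp only [Finset.card_eq_zero, Finset.filter_eq_empty_iff]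
    intro j hj hdvd
    have := (padicValInt_dvd_iff (i + 1) P).mp
      (hdvd.trans (Finset.dvd_prod_of_mem _ hj))
    rcases this with h | h
    · exact hP h
    · omega
  -- count equals the first floor expression
  have hc1 : ∀ i : ℕ,
      ((c (i + 1) : ℤ)) = ⌊((v : ℚ) - (k (i + 1) : ℚ)) / (p : ℚ) ^ (i + 1)⌋ -
        ⌊((u : ℚ) - 1 - (k (i + 1) : ℚ)) / (p : ℚ) ^ (i + 1)⌋ := by
    intro i
    have hfe : (Finset.Icc u v).filter (fun j => (p : ℤ) ^ (i + 1) ∣ n * j - m)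
        = (Finset.Icc u v).filter (fun j => (p : ℤ) ^ (i + 1) ∣ j - k (i + 1)) := by
      apply Finset.filter_congr
      intro j _
      exact hcond (i + 1) (by omega) j
    rw [hcdef]
    simp only [hfe]
    rw [card_dvd_filter ((p : ℤ) ^ (i + 1)) (k (i + 1)) u v (hq (i + 1)) (by omega)]
    push_cast
    ring_nf
  -- count equals the second floor expression
  have hc2 : ∀ i : ℕ,
      ((c (i + 1) : ℤ)) = ⌊(-(u : ℚ) + (k (i + 1) : ℚ)) / (p : ℚ) ^ (i + 1)⌋ -
        ⌊(-(v : ℚ) - 1 + (k (i + 1) : ℚ)) / (p : ℚ) ^ (i + 1)⌋ := by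
    intro i
    have hfe : (Finset.Icc u v).filter (fun j => (p : ℤ) ^ (i + 1) ∣ n * j - m)
        = (Finset.Icc u v).filter (fun j => (p : ℤ) ^ (i + 1) ∣ j - k (i + 1)) := by
      apply Finset.filter_congr
      intro j _
      exact hcond (i + 1) (by omega) j
    rw [hcdef]
    simp only [hfe]
    rw [card_neg ((p : ℤ) ^ (i + 1)) (k (i + 1)) u v,
      card_dvd_filter ((p : ℤ) ^ (i + 1)) (-(k (i + 1))) (-v) (-u) (hq (i + 1)) (by omega)]
    push_cast
    ring_nf
  -- assemble via tsum_eq_sum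
  have ht1 : (∑' i : ℕ, (⌊((v : ℚ) - (k (i + 1) : ℚ)) / (p : ℚ) ^ (i + 1)⌋ -
      ⌊((u : ℚ) - 1 - (k (i + 1) : ℚ)) / (p : ℚ) ^ (i + 1)⌋))
      = ∑ i ∈ Finset.range B, (⌊((v : ℚ) - (k (i + 1) : ℚ)) / (p : ℚ) ^ (i + 1)⌋ -
      ⌊((u : ℚ) - 1 - (k (i + 1) : ℚ)) / (p : ℚ) ^ (i + 1)⌋) := by
    apply tsum_eq_sum
    intro i hi
    rw [← hc1 i, hzero i (by simpa using hi)]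
    norm_num
  have ht2 : (∑' i : ℕ, (⌊(-(u : ℚ) + (k (i + 1) : ℚ)) / (p : ℚ) ^ (i + 1)⌋ -
      ⌊(-(v : ℚ) - 1 + (k (i + 1) : ℚ)) / (p : ℚ) ^ (i + 1)⌋))
      = ∑ i ∈ Finset.range B, (⌊(-(u : ℚ) + (k (i + 1) : ℚ)) / (p : ℚ) ^ (i + 1)⌋ -
      ⌊(-(v : ℚ) - 1 + (k (i + 1) : ℚ)) / (p : ℚ) ^ (i + 1)⌋) := by
    apply tsum_eq_sum
    intro i hi
    rw [← hc2 i, hzero i (by simpa using hi)]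
    norm_num
  have hV1 : (V : ℤ) = ∑ i ∈ Finset.range B, (c (i + 1) : ℤ) := by
    exact_mod_cast congrArg (Nat.cast : ℕ → ℤ) key1
  constructor
  · rw [ht1, hV1]
    exact Finset.sum_congr rfl fun i _ => hc1 i
  · rw [ht2, hV1]
    exact Finset.sum_congr rfl fun i _ => hc2 i
end

section
/- Let m, n, r be positive integers with 0 < m < n and gcd(m, n) = 1, and let p be a prime. Then v_p(D_{m,n,r}) is at most the number of positive integers i for which there exists a positive integer l_i with gcd(l_i, n) = 1 and l_i·p^i ≡ −m (mod n) such that (l_i·p^i + m)/n ≤ (r mod p^i) ≤ ((n − l_i)·p^i − m − n)/n, where r mod p^i denotes the remainder of r upon division by p^i. Furthermore, every positive integer i for which such an l_i exists satisfies p^i ≤ nr. -/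
open Polynomial in
/-- The hypergeometric polynomial
`Y_{m,n,r}(z) = ₂F₁(−r, −r−m/n; 1−m/n; z)
  = ∑_{h=0}^{r} C(r,h) · (∏_{i=r−h+1}^{r} (in+m))/(∏_{i=1}^{h} (in−m)) · z^h`. -/
noncomputable def hyperY (m n r : ℕ) : Polynomial ℚ :=
  ∑ h ∈ Finset.range (r + 1),
    C ((r.choose h : ℚ) *
        (∏ i ∈ Finset.Icc (r - h + 1) r, ((i : ℚ) * n + m)) /
        (∏ i ∈ Finset.Icc 1 h, ((i : ℚ) * n - m))) * X ^ h

open Polynomial in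
/-- The hypergeometric polynomial
`X_{m,n,r}(z) = z^r·₂F₁(−r, −r−m/n; 1−m/n; 1/z)
  = ∑_{h=0}^{r} C(r,h) · (∏_{i=r−h+1}^{r} (in+m))/(∏_{i=1}^{h} (in−m)) · z^{r−h}`. -/
noncomputable def hyperX (m n r : ℕ) : Polynomial ℚ :=
  ∑ h ∈ Finset.range (r + 1),
    C ((r.choose h : ℚ) *
        (∏ i ∈ Finset.Icc (r - h + 1) r, ((i : ℚ) * n + m)) /
        (∏ i ∈ Finset.Icc 1 h, ((i : ℚ) * n - m))) * X ^ (r - h)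

/-- `D_{m,n,r}`: the smallest positive integer `D` such that `D·Y_{m,n,r}`
has integer coefficients. -/
noncomputable def hyperD (m n r : ℕ) : ℕ :=
  sInf {D : ℕ | 0 < D ∧ ∀ h : ℕ, ((D : ℚ) * (hyperY m n r).coeff h).den = 1}

open Finset

def aRes (m n p i : ℕ) : ℕ := ((m : ZMod (p^i)) * (n : ZMod (p^i))⁻¹).val

def SigPred (m n r p i : ℕ) : Prop :=
  (0 < aRes m n p i ∧ aRes m n p i ≤ r % p^i ∧ r % p^i + aRes m n p i + 1 ≤ p^i)
  ∧ (n * aRes m n p i) % p^i = m % p^i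

instance (m n r p i : ℕ) : Decidable (SigPred m n r p i) := by
  unfold SigPred; infer_instance


open Finset in
/-- count of `j ∈ [1,x]` with `j ≡ a [MOD q]`, for `1 ≤ a ≤ q`. -/
lemma cnt_eq {q a : ℕ} (h1 : 1 ≤ a) (h2 : a ≤ q) (x : ℕ) :
    ((Icc 1 x).filter (fun j => j % q = a % q)).card = (x + q - a) / q := by
  have hq : 0 < q := lt_of_lt_of_le h1 h2
  induction x with
  | zero =>
      rw [show Icc 1 0 = (∅ : Finset ℕ) by simp, Finset.filter_empty, Finset.card_empty]
      rw [Nat.div_eq_of_lt (by omega)]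
  | succ x ih =>
      have hins : Icc 1 (x+1) = insert (x+1) (Icc 1 x) := by
        ext j; simp [Finset.mem_Icc, Finset.mem_insert]; omega
      rw [hins, Finset.filter_insert]
      have hstep : (x + 1 + q - a) / q = (x + q - a) / q + if q ∣ (x + q - a) + 1 then 1 else 0 := by
        rw [show x + 1 + q - a = (x + q - a) + 1 by omega, Nat.succ_div]
      have hdvd : (q ∣ (x + q - a) + 1) ↔ ((x+1) % q = a % q) := by
        rw [show (x + q - a) + 1 = (x + 1 + q) - a by omega]
        rw [← Nat.modEq_iff_dvd' (by omega)]
        constructor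
        · intro hmod
          have : a % q = (x+1+q) % q := hmod
          rw [Nat.add_mod_right] at this
          omega
        · intro hmod
          show a % q = (x+1+q) % q
          rw [Nat.add_mod_right]; omega
      by_cases hc : (x+1) % q = a % q
      · rw [if_pos hc, Finset.card_insert_of_notMem (by simp [Finset.mem_Icc])]
        rw [hstep, if_pos (hdvd.mpr hc), ih]
      · rw [if_neg hc, hstep, if_neg (fun hh => hc (hdvd.mp hh)), ih, Nat.add_zero]

open Finset in
lemma key_level {n m q r h a : ℕ} (hm : 0 < m) (hmn : m < n) (hq : 1 < q) (hrh : h ≤ r)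
    (hcop : Nat.Coprime q n) (ha : a < q) (hna : (n * a) % q = m % q) :
    ((Icc 1 h).filter (fun j => q ∣ j * n - m)).card
      ≤ ((Icc (r - h + 1) r).filter (fun j => q ∣ j * n + m)).card
        + (if q ≤ h % q + (r - h) % q then 1 else 0)
        + (if 0 < a ∧ a ≤ r % q ∧ r % q + a + 1 ≤ q then 1 else 0) := by
  have hq0 : 0 < q := by omega
  have hna' : n * a ≡ m [MOD q] := hna
  obtain ⟨a', ha'1, ha'q, ha'mod, ha'cases⟩ :
      ∃ a', 1 ≤ a' ∧ a' ≤ q ∧ a' % q = a % q ∧ ((a = 0 ∧ a' = q) ∨ (0 < a ∧ a' = a)) := by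
    rcases Nat.eq_zero_or_pos a with h0 | h0
    · exact ⟨q, by omega, le_rfl, by simp [h0, Nat.mod_self], Or.inl ⟨h0, rfl⟩⟩
    · exact ⟨a, h0, ha.le, rfl, Or.inr ⟨h0, rfl⟩⟩
  set b' : ℕ := q - a with hb'def
  have hb'1 : 1 ≤ b' := by omega
  have hb'q : b' ≤ q := by omega
  have hab : a + b' = q := by omega
  -- rewrite the A-filter
  have hAfilter : (Icc 1 h).filter (fun j => q ∣ j * n - m)
      = (Icc 1 h).filter (fun j => j % q = a' % q) := by
    apply Finset.filter_congr
    intro j hj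
    simp only [Finset.mem_Icc] at hj
    have hmjn : m ≤ j * n := le_trans hmn.le (by nlinarith [hj.1])
    rw [← Nat.modEq_iff_dvd' hmjn]
    constructor
    · intro hmod
      have h2 : n * j ≡ n * a [MOD q] := by
        calc n * j = j * n := by ring_nf
        _ ≡ m [MOD q] := hmod.symm
        _ ≡ n * a [MOD q] := hna'.symm
      have := Nat.ModEq.cancel_left_of_coprime hcop h2
      rw [ha'mod]; exact this
    · intro hmod
      have hja : j ≡ a [MOD q] := by rw [Nat.ModEq]; omega
      calc m ≡ n * a [MOD q] := hna'.symm
      _ = a * n := by ring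
      _ ≡ j * n [MOD q] := (hja.mul_right n).symm
  have hA : ((Icc 1 h).filter (fun j => q ∣ j * n - m)).card = (h + q - a') / q := by
    rw [hAfilter, cnt_eq ha'1 ha'q]
  -- rewrite the B-filter predicate
  have hBpred : ∀ j : ℕ, (q ∣ j * n + m) ↔ (j % q = b' % q) := by
    intro j
    constructor
    · intro hdvd
      have h1 : j * n + m ≡ n * (j + a) [MOD q] := by
        have he : n * (j + a) = j * n + n * a := by ring
        rw [he]
        exact (Nat.ModEq.refl (j*n)).add hna'.symm
      have h2 : q ∣ n * (j + a) := (Nat.modEq_zero_iff_dvd).mp <|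
        (h1.symm.trans ((Nat.modEq_zero_iff_dvd).mpr hdvd))
      have h3 : q ∣ j + a := hcop.dvd_of_dvd_mul_left h2
      have h4 : j + a ≡ b' + a [MOD q] := by
        rw [show b' + a = q by omega]
        calc j + a ≡ 0 [MOD q] := (Nat.modEq_zero_iff_dvd).mpr h3
        _ ≡ q [MOD q] := (Nat.modEq_zero_iff_dvd.mpr dvd_rfl).symm
      exact Nat.ModEq.add_right_cancel' a h4
    · intro hmod
      have hjb : j ≡ b' [MOD q] := hmod
      have h3 : q ∣ j + a := by
        have h5 : j + a ≡ b' + a [MOD q] := hjb.add_right a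
        rw [show b' + a = q by omega] at h5
        exact Nat.modEq_zero_iff_dvd.mp (h5.trans (Nat.modEq_zero_iff_dvd.mpr dvd_rfl))
      obtain ⟨k, hk⟩ := h3
      have h1 : j * n + m ≡ n * (j + a) [MOD q] := by
        have he : n * (j + a) = j * n + n * a := by ring
        rw [he]
        exact (Nat.ModEq.refl (j*n)).add hna'.symm
      have h2 : q ∣ n * (j + a) := by rw [hk]; exact ⟨n * k, by ring⟩
      exact Nat.modEq_zero_iff_dvd.mp (h1.trans (Nat.modEq_zero_iff_dvd.mpr h2))
  -- split Icc 1 r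
  have hsplit : (r - h + q - b') / q
      + ((Icc (r-h+1) r).filter (fun j => q ∣ j * n + m)).card
      = (r + q - b') / q := by
    rw [← cnt_eq hb'1 hb'q (r-h), ← cnt_eq hb'1 hb'q r]
    have hBfilter : (Icc (r-h+1) r).filter (fun j => q ∣ j * n + m)
        = (Icc (r-h+1) r).filter (fun j => j % q = b' % q) := by
      apply Finset.filter_congr; intro j _; exact hBpred j
    rw [hBfilter, ← Finset.card_union_of_disjoint, ← Finset.filter_union]
    · congr 2
      ext j; simp only [Finset.mem_union, Finset.mem_Icc]; omega
    · exact Finset.disjoint_filter_filter (by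
        rw [Finset.disjoint_left]; intro j hj1 hj2
        simp only [Finset.mem_Icc] at hj1 hj2; omega)
  have hx : h % q < q := Nat.mod_lt _ hq0
  have hs : (r - h) % q < q := Nat.mod_lt _ hq0
  have ht : r % q < q := Nat.mod_lt _ hq0
  have hhd : h = q * (h / q) + h % q := (Nat.div_add_mod h q).symm
  have hrd : r - h = q * ((r-h) / q) + (r-h) % q := (Nat.div_add_mod (r-h) q).symm
  have e1 : (h + q - a') / q = h / q + (if a' ≤ h % q then 1 else 0) := by
    rw [show h + q - a' = (h % q + q - a') + q * (h / q) by omega,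
      Nat.add_mul_div_left _ _ hq0]
    split
    · rw [show (h % q + q - a') / q = 1 from by
        rw [Nat.div_eq_sub_div hq0 (by omega), Nat.div_eq_of_lt (by omega)]]
      omega
    · rw [Nat.div_eq_of_lt (by omega)]; omega
  have e2 : (r + q - b') / q = r / q + (if b' ≤ r % q then 1 else 0) := by
    have hrd2 : r = q * (r / q) + r % q := (Nat.div_add_mod r q).symm
    rw [show r + q - b' = (r % q + q - b') + q * (r / q) by omega,
      Nat.add_mul_div_left _ _ hq0]
    split
    · rw [show (r % q + q - b') / q = 1 from by
        rw [Nat.div_eq_sub_div hq0 (by omega), Nat.div_eq_of_lt (by omega)]]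
      omega
    · rw [Nat.div_eq_of_lt (by omega)]; omega
  have e3 : (r - h + q - b') / q = (r-h) / q + (if b' ≤ (r-h) % q then 1 else 0) := by
    rw [show r - h + q - b' = ((r-h) % q + q - b') + q * ((r-h) / q) by omega,
      Nat.add_mul_div_left _ _ hq0]
    split
    · rw [show ((r-h) % q + q - b') / q = 1 from by
        rw [Nat.div_eq_sub_div hq0 (by omega), Nat.div_eq_of_lt (by omega)]]
      omega
    · rw [Nat.div_eq_of_lt (by omega)]; omega
  have e4 : r / q = h / q + (r-h) / q + (if q ≤ h % q + (r - h) % q then 1 else 0) := by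
    conv_lhs => rw [show r = h + (r - h) by omega]
    exact Nat.add_div hq0
  have e5 : (q ≤ h % q + (r-h) % q ∧ r % q + q = h % q + (r-h) % q)
      ∨ (h % q + (r-h) % q < q ∧ r % q = h % q + (r-h) % q) := by
    have htm : r % q = (h % q + (r-h) % q) % q := by
      conv_lhs => rw [show r = h + (r - h) by omega]
      rw [Nat.add_mod]
    rcases le_or_gt q (h % q + (r-h) % q) with hc | hc
    · left
      refine ⟨hc, ?_⟩
      rw [htm, Nat.mod_eq_sub_mod hc, Nat.mod_eq_of_lt (by omega)]
      omega
    · right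
      exact ⟨hc, by rw [htm, Nat.mod_eq_of_lt (by omega)]⟩
  have final : (h + q - a') / q + (r - h + q - b') / q
      ≤ (r + q - b') / q + (if q ≤ h % q + (r - h) % q then 1 else 0)
        + (if 0 < a ∧ a ≤ r % q ∧ r % q + a + 1 ≤ q then 1 else 0) := by
    rw [e1, e2, e3, e4]
    split_ifs <;> omega
  omega

lemma val_eq_sum {p : ℕ} (hp : p.Prime) {N B : ℕ} (hN : 0 < N) (hNB : N < p ^ B) :
    padicValNat p N = ∑ i ∈ Icc 1 B, (if p ^ i ∣ N then 1 else 0) := by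
  have hvB : padicValNat p N < B := by
    have h1 : p ^ (padicValNat p N) ∣ N := pow_padicValNat_dvd
    have h2 : p ^ (padicValNat p N) ≤ N := Nat.le_of_dvd hN h1
    have h3 : p ^ (padicValNat p N) < p ^ B := lt_of_le_of_lt h2 hNB
    exact (Nat.pow_lt_pow_iff_right hp.one_lt).mp h3
  rw [← Finset.card_filter]
  have hfe : (Icc 1 B).filter (fun i => p ^ i ∣ N) = Icc 1 (padicValNat p N) := by
    ext i
    simp only [Finset.mem_filter, Finset.mem_Icc]
    constructor
    · rintro ⟨⟨h1, _⟩, hdvd⟩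
      refine ⟨h1, ?_⟩
      have := (Nat.Prime.pow_dvd_iff_le_factorization hp hN.ne').mp hdvd
      rwa [Nat.factorization_def _ hp] at this
    · rintro ⟨h1, h2⟩
      refine ⟨⟨h1, by omega⟩, ?_⟩
      rw [Nat.Prime.pow_dvd_iff_le_factorization hp hN.ne', Nat.factorization_def _ hp]
      exact h2
  rw [hfe, Nat.card_Icc]
  omega

lemma val_prod {p : ℕ} (hp : p.Prime) {s : Finset ℕ} {f : ℕ → ℕ} (hf : ∀ j ∈ s, 0 < f j) :
    padicValNat p (∏ j ∈ s, f j) = ∑ j ∈ s, padicValNat p (f j) := by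
  calc padicValNat p (∏ j ∈ s, f j) = (∏ j ∈ s, f j).factorization p :=
        (Nat.factorization_def _ hp).symm
  _ = (∑ j ∈ s, (f j).factorization) p := by
      rw [Nat.factorization_prod (fun x hx => (hf x hx).ne')]
  _ = ∑ j ∈ s, (f j).factorization p := Finsupp.finset_sum_apply _ _ _
  _ = ∑ j ∈ s, padicValNat p (f j) := by
      exact Finset.sum_congr rfl (fun x _ => Nat.factorization_def _ hp)


/-- The core valuation inequality. -/
lemma core_ineq (m n r h p : ℕ) (hm : 0 < m) (hmn : m < n) (hg : Nat.gcd m n = 1)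
    (hr : 0 < r) (hp : p.Prime) (hh : h ≤ r) :
    padicValNat p (∏ j ∈ Icc 1 h, (j * n - m))
      ≤ padicValNat p (r.choose h * ∏ j ∈ Icc (r-h+1) r, (j * n + m))
        + ((Icc 1 (n*r+n)).filter (fun i => SigPred m n r p i)).card := by
  haveI := Fact.mk hp
  have hn2 : 2 ≤ n := by omega
  set B := n * r + n with hBdef
  have hBB : B < p ^ B := Nat.lt_pow_self (n := B) hp.one_lt
  have hfacden : ∀ j ∈ Icc 1 h, 0 < j * n - m := by
    intro j hj; simp only [Finset.mem_Icc] at hj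
    have : 1 * n ≤ j * n := Nat.mul_le_mul_right n hj.1
    omega
  have hrn : r * n = n * r := Nat.mul_comm r n
  have hfacden' : ∀ j ∈ Icc 1 h, j * n - m < p ^ B := by
    intro j hj; simp only [Finset.mem_Icc] at hj
    have h2 : j * n ≤ r * n := Nat.mul_le_mul_right n (le_trans hj.2 hh)
    have h3 : j * n - m < B := by omega
    omega
  have hfacnum : ∀ j ∈ Icc (r-h+1) r, 0 < j * n + m := fun j _ => by positivity
  have hfacnum' : ∀ j ∈ Icc (r-h+1) r, j * n + m < p ^ B := by
    intro j hj; simp only [Finset.mem_Icc] at hj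
    have h2 : j * n ≤ r * n := Nat.mul_le_mul_right n hj.2
    omega
  -- denominator product valuation
  have hDq : padicValNat p (∏ j ∈ Icc 1 h, (j * n - m))
      = ∑ i ∈ Icc 1 B, ∑ j ∈ Icc 1 h, (if p ^ i ∣ j * n - m then 1 else 0) := by
    rw [val_prod hp hfacden]
    rw [Finset.sum_congr rfl (fun j hj => val_eq_sum hp (hfacden j hj) (hfacden' j hj))]
    exact Finset.sum_comm
  by_cases hpn : p ∣ n
  · -- p ∣ n : denominator valuation is 0
    have : padicValNat p (∏ j ∈ Icc 1 h, (j * n - m)) = 0 := by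
      rw [val_prod hp hfacden]
      apply Finset.sum_eq_zero
      intro j hj
      simp only [Finset.mem_Icc] at hj
      apply padicValNat.eq_zero_of_not_dvd
      intro hdvd
      have hjn : p ∣ j * n := Dvd.dvd.mul_left hpn j
      have hmjn : m ≤ j * n := le_trans hmn.le (by nlinarith [hj.1])
      have hpm : p ∣ m := by
        have h4 := Nat.dvd_sub hjn hdvd
        rwa [show j * n - (j * n - m) = m by omega] at h4
      have : p ∣ Nat.gcd m n := Nat.dvd_gcd hpm hpn
      rw [hg] at this
      have h6 := Nat.le_of_dvd one_pos this
      have h7 : 2 ≤ p := hp.two_le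
      omega
    rw [this]; exact Nat.zero_le _
  · -- p ∤ n
    have hcopn : ∀ i : ℕ, Nat.Coprime (p^i) n :=
      fun i => (Nat.Prime.coprime_iff_not_dvd hp |>.mpr hpn).pow_left i
    have hq1 : ∀ i ∈ Icc 1 B, 1 < p ^ i := by
      intro i hi; simp only [Finset.mem_Icc] at hi
      exact Nat.one_lt_pow (by omega) hp.one_lt
    -- aRes facts
    have haval : ∀ i, aRes m n p i < p ^ i := by
      intro i
      haveI : NeZero (p ^ i) := ⟨(Nat.pow_pos (n := i) hp.pos).ne'⟩
      exact ZMod.val_lt _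
    have hna : ∀ i, (n * aRes m n p i) % p ^ i = m % p ^ i := by
      intro i
      haveI : NeZero (p ^ i) := ⟨(Nat.pow_pos (n := i) hp.pos).ne'⟩
      have hu : IsUnit (n : ZMod (p^i)) := by
        rw [ZMod.isUnit_iff_coprime]
        exact (hcopn i).symm
      have hcast : ((n * aRes m n p i : ℕ) : ZMod (p^i)) = (m : ZMod (p^i)) := by
        push_cast
        rw [aRes, ZMod.natCast_val, ZMod.cast_id]
        rw [mul_comm ((m : ZMod (p^i))) _, ← mul_assoc, ZMod.mul_inv_of_unit _ hu, one_mul]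
      have := (ZMod.natCast_eq_natCast_iff _ _ _).mp hcast
      exact this
    -- numerator product valuation
    have hNum : padicValNat p (∏ j ∈ Icc (r-h+1) r, (j * n + m))
        = ∑ i ∈ Icc 1 B, ∑ j ∈ Icc (r-h+1) r, (if p ^ i ∣ j * n + m then 1 else 0) := by
      rw [val_prod hp hfacnum]
      rw [Finset.sum_congr rfl (fun j hj => val_eq_sum hp (hfacnum j hj) (hfacnum' j hj))]
      exact Finset.sum_comm
    -- choose valuation (Kummer)
    have hch : padicValNat p (r.choose h)
        = ∑ i ∈ Icc 1 B, (if p ^ i ≤ h % p ^ i + (r - h) % p ^ i then 1 else 0) := by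
      rw [← Finset.card_filter, ← Finset.Ico_add_one_right_eq_Icc]
      exact padicValNat_choose hh (by
        have h5 : r ≤ n * r := Nat.le_mul_of_pos_left r (by omega)
        have h6 : r < p ^ B := lt_trans (by omega) hBB
        have := Nat.log_lt_of_lt_pow (by omega) h6
        omega)
    have hmul : padicValNat p (r.choose h * ∏ j ∈ Icc (r-h+1) r, (j * n + m))
        = padicValNat p (r.choose h) + padicValNat p (∏ j ∈ Icc (r-h+1) r, (j * n + m)) := by
      apply padicValNat.mul (Nat.choose_pos hh).ne'
      exact (Finset.prod_pos hfacnum).ne'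
    rw [hDq, hmul, hNum, hch, Finset.card_filter, ← Finset.sum_add_distrib,
      ← Finset.sum_add_distrib]
    apply Finset.sum_le_sum
    intro i hi
    have h1 := key_level (n := n) (m := m) (q := p^i) (r := r) (h := h) (a := aRes m n p i)
      hm hmn (hq1 i hi) hh (hcopn i) (haval i) (hna i)
    rw [Finset.card_filter, Finset.card_filter] at h1
    have h2 : (if SigPred m n r p i then (1:ℕ) else 0)
        = (if 0 < aRes m n p i ∧ aRes m n p i ≤ r % p^i ∧ r % p^i + aRes m n p i + 1 ≤ p^i
            then 1 else 0) :=
      if_congr ⟨fun hs => hs.1, fun ht => ⟨ht, hna i⟩⟩ rfl rfl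
    rw [h2]
    omega


open Polynomial in
lemma coeffY (m n r h : ℕ) : (hyperY m n r).coeff h =
    if h ≤ r then (r.choose h : ℚ) *
        (∏ j ∈ Finset.Icc (r - h + 1) r, ((j : ℚ) * n + m)) /
        (∏ j ∈ Finset.Icc 1 h, ((j : ℚ) * n - m)) else 0 := by
  rw [hyperY, Polynomial.finset_sum_coeff]
  simp_rw [Polynomial.coeff_C_mul, Polynomial.coeff_X_pow, mul_ite, mul_one, mul_zero]
  rw [Finset.sum_ite_eq (Finset.range (r+1)) h]
  simp [Nat.lt_succ_iff]

lemma coeff_cast (m n r h : ℕ) (hmn : m < n) (hh : h ≤ r) :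
    (hyperY m n r).coeff h
      = ((r.choose h * ∏ j ∈ Icc (r-h+1) r, (j * n + m) : ℕ) : ℚ)
        / ((∏ j ∈ Icc 1 h, (j * n - m) : ℕ) : ℚ) := by
  rw [coeffY, if_pos hh]
  have hden : ((∏ j ∈ Icc 1 h, (j * n - m) : ℕ) : ℚ) = ∏ j ∈ Icc 1 h, ((j:ℚ) * n - m) := by
    push_cast
    apply Finset.prod_congr rfl
    intro j hj
    simp only [Finset.mem_Icc] at hj
    have hmjn : m ≤ j * n := le_trans hmn.le (by
      have : 1 * n ≤ j * n := Nat.mul_le_mul_right n hj.1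
      omega)
    push_cast [Nat.cast_sub hmjn]
    ring
  rw [hden]
  push_cast
  ring

lemma den_natCast_mul (D : ℕ) (hD : 0 < D) (q : ℚ) :
    ((D : ℚ) * q).den = 1 ↔ q.den ∣ D := by
  constructor
  · intro h1
    have h2 : ((((D:ℚ) * q).num : ℤ) : ℚ) = (D:ℚ) * q := (Rat.den_eq_one_iff _).mp h1
    have h3 : q = (((D:ℚ) * q).num : ℚ) / (D : ℚ) := by
      rw [h2]
      field_simp
    have h4 : q = Rat.divInt ((D:ℚ)*q).num (D : ℤ) := by
      rw [Rat.divInt_eq_div]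
      exact_mod_cast h3
    have h5 := Rat.den_dvd ((D:ℚ)*q).num (D : ℤ)
    rw [← h4] at h5
    exact_mod_cast h5
  · rintro ⟨k, hk⟩
    have h1 : (D:ℚ) * q = ((q.num * k : ℤ) : ℚ) := by
      conv_lhs => rw [← Rat.num_div_den q, hk]
      have : (q.den : ℚ) ≠ 0 := by exact_mod_cast q.den_nz
      push_cast
      field_simp
    rw [h1, Rat.den_intCast]

/-- membership in the exceptional set -/
lemma mem_S (m n r p : ℕ) (hm : 0 < m) (hmn : m < n) (hg : Nat.gcd m n = 1)
    (i : ℕ) (hi : 0 < i) (hsig : SigPred m n r p i) :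
    ∃ l : ℕ, 0 < l ∧ Nat.gcd l n = 1 ∧ n ∣ (l * p ^ i + m) ∧
      ((l * p ^ i + m : ℕ) : ℚ) / (n : ℚ) ≤ ((r % p ^ i : ℕ) : ℚ) ∧
      ((r % p ^ i : ℕ) : ℚ) ≤ (((n : ℚ) - (l : ℚ)) * (p : ℚ) ^ i - m - n) / n := by
  obtain ⟨⟨ha0, har, hra⟩, hna⟩ := hsig
  set q := p ^ i with hqdef
  set a := aRes m n p i with hadef
  have hq0 : 0 < q := by
    rcases Nat.eq_zero_or_pos q with h0 | h0
    · omega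
    · exact h0
  have hman : m ≤ n * a := by
    have : n * 1 ≤ n * a := Nat.mul_le_mul_left n ha0
    omega
  have hqd : q ∣ n * a - m := by
    rw [← Nat.modEq_iff_dvd' hman]
    exact (Nat.ModEq.symm hna)
  have hpos : 0 < n * a - m := by
    have : n * 1 ≤ n * a := Nat.mul_le_mul_left n ha0
    omega
  set l := (n * a - m) / q with hldef
  have hlq : l * q = n * a - m := Nat.div_mul_cancel hqd
  have hl0 : 0 < l := Nat.div_pos (Nat.le_of_dvd hpos hqd) hq0
  have hlqm : l * q + m = n * a := by omega
  have hnq : (0:ℚ) < (n:ℚ) := by exact_mod_cast (by omega : 0 < n)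
  refine ⟨l, hl0, ?_, ?_, ?_, ?_⟩
  · -- gcd
    have hd : Nat.gcd l n ∣ 1 := by
      rw [← hg]
      apply Nat.dvd_gcd
      · have h1 : Nat.gcd l n ∣ n * a := Dvd.dvd.mul_right (Nat.gcd_dvd_right l n) a
        have h2 : Nat.gcd l n ∣ l * q := Dvd.dvd.mul_right (Nat.gcd_dvd_left l n) q
        have h3 := Nat.dvd_sub h1 h2
        rwa [show n * a - l * q = m by omega] at h3
      · exact Nat.gcd_dvd_right l n
    exact Nat.dvd_one.mp hd
  · rw [show l * q + m = n * a from hlqm]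
    exact Dvd.intro a rfl
  · rw [show l * q + m = n * a from hlqm]
    rw [div_le_iff₀ hnq]
    push_cast
    have : (a:ℚ) ≤ ((r % q : ℕ) : ℚ) := by exact_mod_cast har
    nlinarith
  · rw [le_div_iff₀ hnq]
    have hlqQ : (l:ℚ) * q + m = n * a := by exact_mod_cast hlqm
    have hcast : ((r % q : ℕ) : ℚ) + a + 1 ≤ (q:ℚ) := by exact_mod_cast hra
    have hqQ : ((p:ℚ))^i = (q:ℚ) := by rw [hqdef]; push_cast; ring
    rw [hqQ]
    nlinarith [hnq, hcast, hlqQ]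

open Finset in
lemma den_coeff_le (m n r p : ℕ) (hm : 0 < m) (hmn : m < n) (hg : Nat.gcd m n = 1)
    (hr : 0 < r) (hp : p.Prime) (h : ℕ) :
    padicValNat p ((hyperY m n r).coeff h).den
      ≤ ((Icc 1 (n*r+n)).filter (fun i => SigPred m n r p i)).card := by
  haveI := Fact.mk hp
  by_cases hh : h ≤ r
  · set K := ((Icc 1 (n*r+n)).filter (fun i => SigPred m n r p i)).card with hKdef
    set Npv := r.choose h * ∏ j ∈ Icc (r-h+1) r, (j * n + m) with hNpdef
    set Dqv := ∏ j ∈ Icc 1 h, (j * n - m) with hDqdef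
    have hNp : 0 < Npv := by
      apply Nat.mul_pos (Nat.choose_pos hh)
      apply Finset.prod_pos
      intro j hj
      simp only [Finset.mem_Icc] at hj
      positivity
    have hDq : 0 < Dqv := by
      apply Finset.prod_pos
      intro j hj
      simp only [Finset.mem_Icc] at hj
      have : 1 * n ≤ j * n := Nat.mul_le_mul_right n hj.1
      omega
    set x := (hyperY m n r).coeff h with hxdef
    have hxeq : x = (Npv : ℚ) / (Dqv : ℚ) := by
      rw [hxdef, coeff_cast m n r h hmn hh]
    have hNpQ : (0:ℚ) < (Npv:ℚ) := by exact_mod_cast hNp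
    have hDqQ : (0:ℚ) < (Dqv:ℚ) := by exact_mod_cast hDq
    have hxpos : 0 < x := by rw [hxeq]; positivity
    have hnum : 0 < x.num := Rat.num_pos.mpr hxpos
    set z := x.num.toNat with hzdef
    have hz : (z : ℤ) = x.num := Int.toNat_of_nonneg hnum.le
    have hzn : z = x.num.natAbs := by omega
    have hz0 : z ≠ 0 := by omega
    have hden0 : x.den ≠ 0 := x.den_nz
    have hcross : z * Dqv = x.den * Npv := by
      have h2 : (x.num : ℚ) / (x.den : ℚ) = (Npv:ℚ) / (Dqv:ℚ) := by
        rw [Rat.num_div_den x]; exact hxeq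
      rw [div_eq_div_iff (by exact_mod_cast hden0) hDqQ.ne'] at h2
      have h1' : ((z:ℕ):ℚ) * (Dqv:ℚ) = (x.den:ℚ) * (Npv:ℚ) := by
        rw [show ((z:ℕ):ℚ) = (x.num:ℚ) by exact_mod_cast congrArg (fun t : ℤ => (t:ℚ)) hz]
        rw [h2]; ring
      exact_mod_cast h1'
    have hval : padicValNat p z + padicValNat p Dqv
        = padicValNat p x.den + padicValNat p Npv := by
      rw [← padicValNat.mul hz0 hDq.ne', ← padicValNat.mul hden0 hNp.ne', hcross]
    by_contra hKlt
    push_neg at hKlt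
    have hv1 : 1 ≤ padicValNat p x.den := by omega
    have hpden : p ∣ x.den := by
      have h3 : p ^ 1 ∣ p ^ (padicValNat p x.den) := pow_dvd_pow p hv1
      exact dvd_trans (by simpa only [pow_one] using h3) pow_padicValNat_dvd
    have hpz : ¬ p ∣ z := by
      intro hdz
      have h4 : p ∣ Nat.gcd (x.num.natAbs) x.den := Nat.dvd_gcd (hzn ▸ hdz) hpden
      have h5 : Nat.gcd (x.num.natAbs) x.den = 1 := x.reduced
      rw [h5] at h4
      have := Nat.le_of_dvd one_pos h4
      have := hp.two_le
      omega
    have hvz : padicValNat p z = 0 := padicValNat.eq_zero_of_not_dvd hpz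
    have hcore := core_ineq m n r h p hm hmn hg hr hp hh
    rw [← hDqdef, ← hNpdef, ← hKdef] at hcore
    omega
  · rw [coeffY, if_neg hh]
    norm_num

/-- **Proposition 1.** The power to which a prime `p` divides `D_{m,n,r}` is at most
the number of positive integers `i` for which there exists a positive integer `l`
with `gcd(l,n) = 1`, `l·p^i ≡ −m (mod n)` and
`(l·p^i + m)/n ≤ (r mod p^i) ≤ ((n − l)·p^i − m − n)/n`; moreover every such `i`
satisfies `p^i ≤ nr`. -/
theorem padicValNat_hyperD_le (m n r : ℕ) (hm : 0 < m) (hmn : m < n)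
    (hg : Nat.gcd m n = 1) (hr : 0 < r) (p : ℕ) (hp : p.Prime) :
    padicValNat p (hyperD m n r) ≤
      {i : ℕ | 0 < i ∧ ∃ l : ℕ, 0 < l ∧ Nat.gcd l n = 1 ∧ n ∣ (l * p ^ i + m) ∧
        ((l * p ^ i + m : ℕ) : ℚ) / (n : ℚ) ≤ ((r % p ^ i : ℕ) : ℚ) ∧
        ((r % p ^ i : ℕ) : ℚ) ≤ (((n : ℚ) - (l : ℚ)) * (p : ℚ) ^ i - m - n) / n}.ncard ∧
    ∀ i : ℕ, 0 < i →
      (∃ l : ℕ, 0 < l ∧ Nat.gcd l n = 1 ∧ n ∣ (l * p ^ i + m) ∧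
        ((l * p ^ i + m : ℕ) : ℚ) / (n : ℚ) ≤ ((r % p ^ i : ℕ) : ℚ) ∧
        ((r % p ^ i : ℕ) : ℚ) ≤ (((n : ℚ) - (l : ℚ)) * (p : ℚ) ^ i - m - n) / n) →
      p ^ i ≤ n * r := by
  have hnq : (0:ℚ) < (n:ℚ) := by exact_mod_cast (by omega : 0 < n)
  -- Part 2
  have part2 : ∀ i : ℕ, 0 < i →
      (∃ l : ℕ, 0 < l ∧ Nat.gcd l n = 1 ∧ n ∣ (l * p ^ i + m) ∧
        ((l * p ^ i + m : ℕ) : ℚ) / (n : ℚ) ≤ ((r % p ^ i : ℕ) : ℚ) ∧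
        ((r % p ^ i : ℕ) : ℚ) ≤ (((n : ℚ) - (l : ℚ)) * (p : ℚ) ^ i - m - n) / n) →
      p ^ i ≤ n * r := by
    rintro i hi ⟨l, hl, -, -, hle, -⟩
    rw [div_le_iff₀ hnq] at hle
    have hle' : l * p ^ i + m ≤ (r % p ^ i) * n := by exact_mod_cast hle
    have h1 : 1 * p ^ i ≤ l * p ^ i := Nat.mul_le_mul_right _ hl
    have h2 : (r % p ^ i) * n ≤ r * n := Nat.mul_le_mul_right n (Nat.mod_le r _)
    have h3 : r * n = n * r := Nat.mul_comm r n
    omega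
  refine ⟨?_, part2⟩
  set S : Set ℕ := {i : ℕ | 0 < i ∧ ∃ l : ℕ, 0 < l ∧ Nat.gcd l n = 1 ∧ n ∣ (l * p ^ i + m) ∧
        ((l * p ^ i + m : ℕ) : ℚ) / (n : ℚ) ≤ ((r % p ^ i : ℕ) : ℚ) ∧
        ((r % p ^ i : ℕ) : ℚ) ≤ (((n : ℚ) - (l : ℚ)) * (p : ℚ) ^ i - m - n) / n} with hSdef
  set B := n * r + n with hBdef
  set K := ((Finset.Icc 1 B).filter (fun i => SigPred m n r p i)).card with hKdef
  have hfin : S.Finite := by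
    apply Set.Finite.subset (Set.finite_Iic (n*r))
    rintro i ⟨hi0, hex⟩
    have hpi := part2 i hi0 hex
    have h4 : i < 2 ^ i := Nat.lt_two_pow_self
    have h5 : 2 ^ i ≤ p ^ i := Nat.pow_le_pow_left hp.two_le i
    simp only [Set.mem_Iic]
    omega
  have hKle : K ≤ S.ncard := by
    have hsubset : ↑((Finset.Icc 1 B).filter (fun i => SigPred m n r p i)) ⊆ S := by
      intro i hi
      simp only [Finset.coe_filter, Set.mem_setOf_eq, Finset.mem_Icc] at hi
      obtain ⟨⟨hi1, _⟩, hsig⟩ := hi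
      exact ⟨hi1, mem_S m n r p hm hmn hg i hi1 hsig⟩
    calc K = (↑((Finset.Icc 1 B).filter (fun i => SigPred m n r p i)) : Set ℕ).ncard :=
          (Set.ncard_coe_finset _).symm
    _ ≤ S.ncard := Set.ncard_le_ncard hsubset hfin
  refine le_trans ?_ hKle
  -- main bound on hyperD
  set SetD := {D : ℕ | 0 < D ∧ ∀ h : ℕ, ((D : ℚ) * (hyperY m n r).coeff h).den = 1} with hSetD
  have hden_dvd_iff : ∀ D : ℕ, 0 < D →
      (D ∈ SetD ↔ (0 < D ∧ ∀ h : ℕ, ((hyperY m n r).coeff h).den ∣ D)) := by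
    intro D hD
    simp only [hSetD, Set.mem_setOf_eq]
    constructor
    · rintro ⟨h1, h2⟩
      exact ⟨h1, fun h => (den_natCast_mul D hD _).mp (h2 h)⟩
    · rintro ⟨h1, h2⟩
      exact ⟨h1, fun h => (den_natCast_mul D hD _).mpr (h2 h)⟩
  have hne : SetD.Nonempty := by
    refine ⟨∏ k ∈ Finset.range (r+1), ((hyperY m n r).coeff k).den, ?_⟩
    have hD0 : 0 < ∏ k ∈ Finset.range (r+1), ((hyperY m n r).coeff k).den :=
      Finset.prod_pos (fun k _ => (hyperY m n r).coeff k |>.pos)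
    rw [hden_dvd_iff _ hD0]
    refine ⟨hD0, fun h => ?_⟩
    by_cases hh : h ≤ r
    · exact Finset.dvd_prod_of_mem _ (Finset.mem_range.mpr (by omega))
    · rw [coeffY, if_neg hh]
      simp
  have hmem : hyperD m n r ∈ SetD := Nat.sInf_mem hne
  have hDpos : 0 < hyperD m n r := hmem.1
  have hdvd : ∀ h : ℕ, ((hyperY m n r).coeff h).den ∣ hyperD m n r :=
    ((hden_dvd_iff _ hDpos).mp hmem).2
  have hdenle : ∀ h : ℕ, padicValNat p ((hyperY m n r).coeff h).den ≤ K :=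
    fun h => den_coeff_le m n r p hm hmn hg hr hp h
  by_contra hgt
  push_neg at hgt
  set v := padicValNat p (hyperD m n r) with hvdef
  set e := v - K with hedef
  have he1 : 1 ≤ e := by omega
  have hpe : p ^ e ∣ hyperD m n r :=
    dvd_trans (pow_dvd_pow p (by omega : e ≤ v)) pow_padicValNat_dvd
  set D' := hyperD m n r / p ^ e with hD'def
  have hD'mul : D' * p ^ e = hyperD m n r := Nat.div_mul_cancel hpe
  have hpe1 : 1 < p ^ e := Nat.one_lt_pow (by omega) hp.one_lt
  have hD'pos : 0 < D' := by
    rcases Nat.eq_zero_or_pos D' with h0 | h0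
    · rw [h0, zero_mul] at hD'mul; omega
    · exact h0
  have hlt : D' < hyperD m n r := Nat.div_lt_self hDpos hpe1
  have hD'mem : D' ∈ SetD := by
    rw [hden_dvd_iff _ hD'pos]
    refine ⟨hD'pos, fun h => ?_⟩
    set d := ((hyperY m n r).coeff h).den with hddef
    have hd0 : d ≠ 0 := ((hyperY m n r).coeff h).den_nz
    rw [← Nat.factorization_le_iff_dvd hd0 hD'pos.ne']
    rw [Finsupp.le_def]
    intro qq
    have hDfact : D'.factorization = (hyperD m n r).factorization - (p ^ e).factorization :=
      Nat.factorization_div hpe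
    by_cases hqp : qq.Prime
    · have hdq : d.factorization qq ≤ (hyperD m n r).factorization qq := by
        have := (Nat.factorization_le_iff_dvd hd0 hDpos.ne').mpr (hdvd h)
        exact this qq
      rw [hDfact, Finsupp.tsub_apply]
      by_cases hq : qq = p
      · rw [hq] at hdq ⊢
        rw [hp.factorization_pow, Finsupp.single_eq_same]
        have h7 : d.factorization p ≤ K := by
          rw [Nat.factorization_def _ hp]
          exact hdenle h
        have h8 : (hyperD m n r).factorization p = v := by
          rw [Nat.factorization_def _ hp]
        omega
      · rw [hp.factorization_pow, Finsupp.single_eq_of_ne' (fun hh => hq hh.symm)]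
        omega
    · rw [Nat.factorization_eq_zero_of_not_prime _ hqp]
      exact Nat.zero_le _
  have h10 := Nat.sInf_le hD'mem
  have hDef : hyperD m n r = sInf SetD := by rw [hSetD]; rfl
  rw [← hDef] at h10
  omega
end

section
/- Let m, n, r be positive integers with 0 < m < n and gcd(m, n) = 1. If a prime p divides D_{m,n,r}, then v_p(D_{m,n,r}) ≤ ⌊log(nr)/log p⌋. -/
section AuxHyper
open Finset

lemma aux_den_mul_nat_eq_one_iff (D : ℕ) (x : ℚ) : ((D:ℚ) * x).den = 1 ↔ x.den ∣ D := by
  constructor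
  · intro hden
    have h2 : ((((D:ℚ)*x).num : ℤ) : ℚ) = (D:ℚ) * x := Rat.den_eq_one_iff _ |>.mp hden
    have h3 : (((D:ℚ)*x).num : ℚ) * (x.den:ℚ) = (D:ℚ) * (x.num:ℚ) := by
      rw [h2, mul_assoc]
      congr 1
      exact_mod_cast (Rat.mul_den_eq_num x)
    have h4 : ((D:ℚ)*x).num * (x.den:ℤ) = (D:ℤ) * x.num := by exact_mod_cast h3
    have h5 : (x.den : ℤ) ∣ (D:ℤ) * x.num := ⟨((D:ℚ)*x).num, by linarith [h4]⟩
    have h6 : x.den ∣ D * x.num.natAbs := by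
      have := Int.natAbs_dvd_natAbs.mpr h5
      simpa [Int.natAbs_mul] using this
    exact (Nat.Coprime.dvd_of_dvd_mul_right (Nat.Coprime.symm x.reduced) h6)
  · rintro ⟨t, rfl⟩
    have key : ((x.den * t : ℕ) : ℚ) * x = ((x.num * t : ℤ) : ℚ) := by
      push_cast
      rw [mul_right_comm, mul_comm (x.den:ℚ) x]
      congr 1
      exact_mod_cast (Rat.mul_den_eq_num x)
    rw [key, Rat.den_intCast]

lemma aux_coeff_hyperY (m n r : ℕ) (hmn : m < n) (h : ℕ) :
    (hyperY m n r).coeff h =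
      if h ≤ r then
        ((r.choose h * ∏ i ∈ Icc (r - h + 1) r, (i * n + m) : ℕ) : ℚ) /
          ((∏ i ∈ Icc 1 h, (i * n - m) : ℕ) : ℚ)
      else 0 := by
  have cA : ∀ j : ℕ, ((∏ i ∈ Icc (r - j + 1) r, (i * n + m) : ℕ) : ℚ)
      = ∏ i ∈ Icc (r - j + 1) r, ((i : ℚ) * n + m) := by
    intro j; push_cast; rfl
  have cB : ∀ j : ℕ, ((∏ i ∈ Icc 1 j, (i * n - m) : ℕ) : ℚ)
      = ∏ i ∈ Icc 1 j, ((i : ℚ) * n - m) := by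
    intro j
    rw [Nat.cast_prod]
    refine Finset.prod_congr rfl fun i hi => ?_
    have hi1 : 1 ≤ i := (Finset.mem_Icc.mp hi).1
    have : m ≤ i * n := le_trans hmn.le (Nat.le_mul_of_pos_left n hi1)
    push_cast [Nat.cast_sub this]
    ring
  rw [hyperY, Polynomial.finset_sum_coeff]
  simp only [Polynomial.coeff_C_mul, Polynomial.coeff_X_pow, mul_ite, mul_one, mul_zero]
  rw [Finset.sum_ite_eq (Finset.range (r+1)) h]
  simp only [Finset.mem_range, Nat.lt_succ_iff]
  split_ifs with hh
  · rw [Nat.cast_mul, cA, cB]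
  · rfl

/-- window counting: any residue class count in a length-`h` window is within 1 of
any other residue class count in another length-`h` window -/
lemma aux_window (q : ℕ) (hq : 0 < q) (s t h v w : ℕ) :
    (((Ico s (s+h)).filter (· ≡ v [MOD q])).card : ℤ) ≤
      (((Ico t (t+h)).filter (· ≡ w [MOD q])).card : ℤ) + 1 := by
  rw [Nat.Ico_filter_modEq_card _ _ hq, Nat.Ico_filter_modEq_card _ _ hq]
  have e1 : ((s:ℚ) + h - v) / q = ((s:ℚ) - v)/q + h/q := by ring
  have e2 : ((t:ℚ) + h - w) / q = ((t:ℚ) - w)/q + h/q := by ring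
  push_cast
  rw [e1, e2]
  set y := ((s:ℚ) - v)/q
  set z := ((t:ℚ) - w)/q
  have h1 : (⌈y + (h:ℚ)/q⌉ : ℚ) < y + (h:ℚ)/q + 1 := Int.ceil_lt_add_one _
  have h2 : (⌈y⌉ : ℚ) ≥ y := Int.le_ceil _
  have h3 : (⌈z + (h:ℚ)/q⌉ : ℚ) ≥ z + (h:ℚ)/q := Int.le_ceil _
  have h4 : (⌈z⌉ : ℚ) < z + 1 := Int.ceil_lt_add_one _
  have key : ⌈y + (h:ℚ)/q⌉ - ⌈y⌉ ≤ (⌈z + (h:ℚ)/q⌉ - ⌈z⌉) + 1 := by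
    have h5 : ((⌈y + (h:ℚ)/q⌉ - ⌈y⌉ : ℤ) : ℚ) < ((⌈z + (h:ℚ)/q⌉ - ⌈z⌉ : ℤ) : ℚ) + 2 := by
      push_cast; linarith
    have h6 : (⌈y + (h:ℚ)/q⌉ - ⌈y⌉ : ℤ) < (⌈z + (h:ℚ)/q⌉ - ⌈z⌉ : ℤ) + 2 := by exact_mod_cast h5
    omega
  omega


lemma aux_level (p n m r h k : ℕ) (hp : p.Prime) (hpn : ¬ p ∣ n) (hm : 0 < m)
    (hmn : m < n) (hh : h ≤ r) (hk : 0 < k) :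
    ((Icc 1 h).filter (fun i => p^k ∣ i*n - m)).card ≤
      ((Icc (r-h+1) r).filter (fun i => p^k ∣ i*n + m)).card + 1 := by
  set q := p^k with hqdef
  have hq : 0 < q := pow_pos hp.pos k
  haveI : NeZero q := ⟨hq.ne'⟩
  have hcop : Nat.Coprime n q :=
    Nat.Coprime.pow_right k ((hp.coprime_iff_not_dvd.mpr hpn).symm)
  have hu : IsUnit (n : ZMod q) := (ZMod.isUnit_iff_coprime n q).mpr hcop
  set u := hu.unit with hudef
  have hun : (u : ZMod q) = (n : ZMod q) := hu.unit_spec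
  set c : ℕ := ((m : ZMod q) * ↑u⁻¹).val with hcdef
  set c' : ℕ := ((-(m : ZMod q)) * ↑u⁻¹).val with hc'def
  have hcc : ((c : ℕ) : ZMod q) = (m : ZMod q) * ↑u⁻¹ := ZMod.natCast_rightInverse _
  have hcc' : ((c' : ℕ) : ZMod q) = (-(m : ZMod q)) * ↑u⁻¹ := ZMod.natCast_rightInverse _
  -- den set
  have eden : (Icc 1 h).filter (fun i => q ∣ i*n - m) =
      (Ico 1 (1+h)).filter (· ≡ c [MOD q]) := by
    rw [show (1+h) = h+1 by omega, Finset.Ico_add_one_right_eq_Icc]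
    refine Finset.filter_congr fun i hi => ?_
    have hi1 : 1 ≤ i := (Finset.mem_Icc.mp hi).1
    have him : m ≤ i * n := le_trans hmn.le (Nat.le_mul_of_pos_left n hi1)
    rw [← Nat.modEq_iff_dvd' him]
    rw [Nat.ModEq.comm, ← ZMod.natCast_eq_natCast_iff, ← ZMod.natCast_eq_natCast_iff]
    push_cast
    rw [hcc]
    constructor
    · intro hin
      rw [Units.eq_mul_inv_iff_mul_eq, hun]; exact hin
    · intro hic
      rw [Units.eq_mul_inv_iff_mul_eq, hun] at hic; exact hic
  -- num set
  have enum : (Icc (r-h+1) r).filter (fun i => q ∣ i*n + m) =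
      (Ico (r-h+1) ((r-h+1)+h)).filter (· ≡ c' [MOD q]) := by
    rw [show (r-h+1)+h = r+1 by omega, Finset.Ico_add_one_right_eq_Icc]
    refine Finset.filter_congr fun i hi => ?_
    rw [← ZMod.natCast_eq_zero_iff, ← ZMod.natCast_eq_natCast_iff]
    push_cast
    rw [hcc']
    constructor
    · intro hin
      rw [Units.eq_mul_inv_iff_mul_eq, hun]
      linear_combination hin
    · intro hic
      rw [Units.eq_mul_inv_iff_mul_eq, hun] at hic
      linear_combination hic
  have := aux_window q hq 1 (r-h+1) h c c'
  rw [← eden, ← enum] at this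
  exact_mod_cast this

-- valuation as count of dividing prime powers, upper version
lemma aux_card_eq (p K x : ℕ) (hp : p.Prime) (hx : x ≠ 0) (hvK : padicValNat p x ≤ K) :
    padicValNat p x = ((Icc 1 K).filter (fun k => p^k ∣ x)).card := by
  have : (Icc 1 K).filter (fun k => p^k ∣ x) = Icc 1 (padicValNat p x) := by
    ext k
    simp only [Finset.mem_filter, Finset.mem_Icc]
    constructor
    · rintro ⟨⟨h1, h2⟩, hdvd⟩
      exact ⟨h1, (Nat.Prime.pow_dvd_iff_le_factorization hp hx).mp hdvd |>.trans_eq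
        (Nat.factorization_def x hp)⟩
    · rintro ⟨h1, h2⟩
      refine ⟨⟨h1, h2.trans hvK⟩, ?_⟩
      rw [Nat.Prime.pow_dvd_iff_le_factorization hp hx, Nat.factorization_def x hp]
      exact h2
  rw [this, Nat.card_Icc]
  omega

lemma aux_card_le (p K x : ℕ) (hp : p.Prime) (hx : x ≠ 0) :
    ((Icc 1 K).filter (fun k => p^k ∣ x)).card ≤ padicValNat p x := by
  have hsub : (Icc 1 K).filter (fun k => p^k ∣ x) ⊆ Icc 1 (padicValNat p x) := by
    intro k hk
    simp only [Finset.mem_filter, Finset.mem_Icc] at hk ⊢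
    refine ⟨hk.1.1, ?_⟩
    rw [Nat.Prime.pow_dvd_iff_le_factorization hp hx, Nat.factorization_def x hp] at hk
    exact hk.2
  calc _ ≤ (Icc 1 (padicValNat p x)).card := Finset.card_le_card hsub
    _ = padicValNat p x := by rw [Nat.card_Icc]; omega

lemma aux_swap (I : Finset ℕ) (K : ℕ) (P : ℕ → ℕ → Prop) [∀ i k, Decidable (P i k)] :
    ∑ i ∈ I, ((Icc 1 K).filter (fun k => P i k)).card
      = ∑ k ∈ Icc 1 K, (I.filter (fun i => P i k)).card := by
  simp only [Finset.card_filter]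
  rw [Finset.sum_comm]

lemma aux_prod_bound (p n m r h : ℕ) (hp : p.Prime) (hm : 0 < m) (hmn : m < n)
    (hg : Nat.gcd m n = 1) (hr : 0 < r) (hh : h ≤ r) :
    padicValNat p (∏ i ∈ Icc 1 h, (i*n - m)) ≤
      padicValNat p (∏ i ∈ Icc (r-h+1) r, (i*n + m)) + Nat.log p (n*r) := by
  haveI := Fact.mk hp
  have hBfac : ∀ i ∈ Icc 1 h, i*n - m ≠ 0 ∧ i*n - m ≤ n*r := by
    intro i hi
    obtain ⟨h1, h2⟩ := Finset.mem_Icc.mp hi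
    have e1 : m < i*n := lt_of_lt_of_le hmn (Nat.le_mul_of_pos_left n h1)
    have e2 : i*n ≤ r*n := Nat.mul_le_mul_right n (h2.trans hh)
    refine ⟨Nat.sub_ne_zero_of_lt e1, ?_⟩
    calc i*n - m ≤ i*n := Nat.sub_le _ _
      _ ≤ r*n := e2
      _ = n*r := Nat.mul_comm r n
  have hAfac : ∀ i ∈ Icc (r-h+1) r, i*n + m ≠ 0 := fun i _ => by omega
  have hvB : padicValNat p (∏ i ∈ Icc 1 h, (i*n - m))
      = ∑ i ∈ Icc 1 h, padicValNat p (i*n - m) := by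
    rw [← Nat.factorization_def _ hp, Nat.factorization_prod (fun i hi => (hBfac i hi).1)]
    rw [Finsupp.finset_sum_apply]
    exact Finset.sum_congr rfl fun i hi => Nat.factorization_def _ hp
  have hvA : padicValNat p (∏ i ∈ Icc (r-h+1) r, (i*n + m))
      = ∑ i ∈ Icc (r-h+1) r, padicValNat p (i*n + m) := by
    rw [← Nat.factorization_def _ hp, Nat.factorization_prod hAfac]
    rw [Finsupp.finset_sum_apply]
    exact Finset.sum_congr rfl fun i hi => Nat.factorization_def _ hp
  rw [hvB, hvA]
  by_cases hpn : p ∣ n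
  · -- each denominator term has valuation 0
    have : ∀ i ∈ Icc 1 h, padicValNat p (i*n - m) = 0 := by
      intro i hi
      apply padicValNat.eq_zero_of_not_dvd
      intro hdvd
      obtain ⟨h1, _⟩ := Finset.mem_Icc.mp hi
      have him : m ≤ i*n := le_trans hmn.le (Nat.le_mul_of_pos_left n h1)
      have hpm : p ∣ m := by
        have := Nat.dvd_sub (Dvd.dvd.mul_left hpn i) hdvd
        rwa [Nat.sub_sub_self him] at this
      have : p ∣ Nat.gcd m n := Nat.dvd_gcd hpm hpn
      rw [hg] at this
      exact hp.one_lt.ne' (Nat.dvd_one.mp this)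
    rw [Finset.sum_congr rfl this]
    simp
  · set K := Nat.log p (n*r) with hK
    have hnr : n*r ≠ 0 := Nat.mul_ne_zero (by omega) (by omega)
    -- rewrite denominator valuations as counts
    have hBcount : ∀ i ∈ Icc 1 h, padicValNat p (i*n - m)
        = ((Icc 1 K).filter (fun k => p^k ∣ i*n - m)).card := by
      intro i hi
      refine aux_card_eq p K _ hp (hBfac i hi).1 ?_
      have hdvd : p ^ padicValNat p (i*n-m) ∣ (i*n-m) := pow_padicValNat_dvd
      have hle : p ^ padicValNat p (i*n-m) ≤ n*r :=
        (Nat.le_of_dvd (Nat.pos_of_ne_zero (hBfac i hi).1) hdvd).trans (hBfac i hi).2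
      exact (Nat.le_log_iff_pow_le hp.one_lt hnr).mpr hle
    rw [Finset.sum_congr rfl hBcount, aux_swap]
    have step : ∑ k ∈ Icc 1 K, ((Icc 1 h).filter (fun i => p^k ∣ i*n - m)).card
        ≤ ∑ k ∈ Icc 1 K, (((Icc (r-h+1) r).filter (fun i => p^k ∣ i*n + m)).card + 1) := by
      refine Finset.sum_le_sum fun k hk => ?_
      exact aux_level p n m r h k hp hpn hm hmn hh (Finset.mem_Icc.mp hk).1
    refine step.trans ?_
    rw [Finset.sum_add_distrib, Finset.sum_const, smul_eq_mul, mul_one, Nat.card_Icc]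
    have : ∑ k ∈ Icc 1 K, ((Icc (r-h+1) r).filter (fun i => p^k ∣ i*n + m)).card
        = ∑ i ∈ Icc (r-h+1) r, ((Icc 1 K).filter (fun k => p^k ∣ i*n + m)).card :=
      (aux_swap _ _ _).symm
    rw [this]
    have hle2 : ∑ i ∈ Icc (r-h+1) r, ((Icc 1 K).filter (fun k => p^k ∣ i*n + m)).card
        ≤ ∑ i ∈ Icc (r-h+1) r, padicValNat p (i*n + m) :=
      Finset.sum_le_sum fun i hi => aux_card_le p K _ hp (hAfac i hi)
    omega

lemma aux_den_val (p : ℕ) (hp : p.Prime) (x : ℚ) (K : ℕ)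
    (hval : -(K:ℤ) ≤ padicValRat p x) : padicValNat p x.den ≤ K := by
  by_cases hd : p ∣ x.den
  · have hcop : Nat.Coprime x.num.natAbs x.den := x.reduced
    have hnum : ¬ p ∣ x.num.natAbs := fun hn =>
      hp.one_lt.ne' (Nat.dvd_one.mp (hcop ▸ Nat.dvd_gcd hn hd))
    have h0 : padicValInt p x.num = 0 := by
      rw [padicValInt]
      exact padicValNat.eq_zero_of_not_dvd hnum
    rw [padicValRat_def, h0] at hval
    omega
  · rw [padicValNat.eq_zero_of_not_dvd hd]; omega

open Finset in
/-- The valuation of the coefficient denominators of `hyperY` is at most `log p (n*r)`. -/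
lemma aux_coeff_den_bound (m n r : ℕ) (hm : 0 < m) (hmn : m < n) (hg : Nat.gcd m n = 1)
    (hr : 0 < r) (p : ℕ) (hp : p.Prime) (h : ℕ) (hh : h ≤ r) :
    padicValNat p ((hyperY m n r).coeff h).den ≤ Nat.log p (n*r) := by
  haveI := Fact.mk hp
  set A : ℕ := ∏ i ∈ Icc (r - h + 1) r, (i * n + m) with hA
  set B : ℕ := ∏ i ∈ Icc 1 h, (i * n - m) with hB
  have hA0 : A ≠ 0 := Finset.prod_ne_zero_iff.mpr fun i _ => by omega
  have hB0 : B ≠ 0 := Finset.prod_ne_zero_iff.mpr fun i hi => by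
    have h1 : 1 ≤ i := (Finset.mem_Icc.mp hi).1
    have : m < i*n := lt_of_lt_of_le hmn (Nat.le_mul_of_pos_left n h1)
    omega
  have hC0 : r.choose h ≠ 0 := (Nat.choose_pos hh).ne'
  have hN0 : r.choose h * A ≠ 0 := Nat.mul_ne_zero hC0 hA0
  have hcoeff : (hyperY m n r).coeff h = ((r.choose h * A : ℕ) : ℚ) / ((B : ℕ) : ℚ) := by
    rw [aux_coeff_hyperY m n r hmn h, if_pos hh]
  have hx0 : (hyperY m n r).coeff h ≠ 0 := by
    rw [hcoeff]
    positivity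
  apply aux_den_val p hp _ _
  rw [hcoeff, padicValRat.div (p := p) (by exact_mod_cast hN0) (by exact_mod_cast hB0),
    padicValRat.of_nat, padicValRat.of_nat]
  have e1 : padicValNat p (r.choose h * A) = padicValNat p (r.choose h) + padicValNat p A :=
    padicValNat.mul hC0 hA0
  have e2 : padicValNat p B ≤ padicValNat p A + Nat.log p (n*r) :=
    aux_prod_bound p n m r h hp hm hmn hg hr hh
  omega


end AuxHyper

/-- **Lemma 2(a).** If a prime `p` divides `D_{m,n,r}`, then
`v_p(D_{m,n,r}) ≤ ⌊log(nr)/log p⌋`. -/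
theorem padicValNat_hyperD_le_log (m n r : ℕ) (hm : 0 < m) (hmn : m < n)
    (hg : Nat.gcd m n = 1) (hr : 0 < r) (p : ℕ) (hp : p.Prime)
    (hdvd : p ∣ hyperD m n r) :
    (padicValNat p (hyperD m n r) : ℤ) ≤
      ⌊Real.log ((n : ℝ) * (r : ℝ)) / Real.log (p : ℝ)⌋ := by
  set K := Nat.log p (n*r) with hK
  set d : ℕ → ℕ := fun h => ((hyperY m n r).coeff h).den with hd
  have hd0 : ∀ h, d h ≠ 0 := fun h => ((hyperY m n r).coeff h).den_nz
  have hdbig : ∀ h, r < h → d h = 1 := by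
    intro h hh
    simp only [hd]
    rw [aux_coeff_hyperY m n r hmn h, if_neg (by omega)]
    rfl
  have hdK : ∀ h, padicValNat p (d h) ≤ K := by
    intro h
    by_cases hh : h ≤ r
    · exact aux_coeff_den_bound m n r hm hmn hg hr p hp h hh
    · rw [hdbig h (by omega)]; simp
  -- the witness
  set W : ℕ := ∏ h ∈ Finset.range (r+1), d h with hW
  have hW0 : W ≠ 0 := Finset.prod_ne_zero_iff.mpr fun h _ => hd0 h
  have hWdvd : ∀ h, d h ∣ W := by
    intro h
    by_cases hh : h ≤ r
    · exact Finset.dvd_prod_of_mem d (Finset.mem_range.mpr (by omega))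
    · rw [hdbig h (by omega)]; exact one_dvd _
  have hWS : W ∈ {D : ℕ | 0 < D ∧ ∀ h : ℕ, ((D : ℚ) * (hyperY m n r).coeff h).den = 1} :=
    ⟨Nat.pos_of_ne_zero hW0, fun h => (aux_den_mul_nat_eq_one_iff W _).mpr (hWdvd h)⟩
  have hmem := Nat.sInf_mem (s := {D : ℕ | 0 < D ∧
      ∀ h : ℕ, ((D : ℚ) * (hyperY m n r).coeff h).den = 1}) ⟨W, hWS⟩
  rw [← hyperD] at hmem
  obtain ⟨hD0pos, hD0⟩ := hmem
  set D₀ := hyperD m n r with hD₀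
  have hdhD : ∀ h, d h ∣ D₀ := fun h => (aux_den_mul_nat_eq_one_iff D₀ _).mp (hD0 h)
  -- main valuation bound
  have hmain : padicValNat p D₀ ≤ K := by
    by_contra hcon
    push_neg at hcon
    obtain ⟨D₁, hD1⟩ := hdvd
    have hD1pos : 0 < D₁ := by
      rcases Nat.eq_zero_or_pos D₁ with h0 | h0
      · rw [h0, mul_zero] at hD1; omega
      · exact h0
    have hfD0 : D₀.factorization = p.factorization + D₁.factorization := by
      rw [hD1, Nat.factorization_mul hp.pos.ne' hD1pos.ne']
    have hfp : p.factorization = Finsupp.single p 1 := hp.factorization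
    have hdhD1 : ∀ h, d h ∣ D₁ := by
      intro h
      rw [← Nat.factorization_le_iff_dvd (hd0 h) hD1pos.ne']
      rw [Finsupp.le_def]
      intro l
      have hle0 : (d h).factorization l ≤ D₀.factorization l :=
        Finsupp.le_def.mp ((Nat.factorization_le_iff_dvd (hd0 h) hD0pos.ne').mpr (hdhD h)) l
      have hsplit : D₀.factorization l = p.factorization l + D₁.factorization l := by
        rw [hfD0]; rfl
      by_cases hl : l = p
      · have h1 : (d h).factorization l = padicValNat p (d h) := by
          rw [hl]; exact Nat.factorization_def _ hp
        have h2 : D₀.factorization l = padicValNat p D₀ := by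
          rw [hl]; exact Nat.factorization_def _ hp
        have h3 : p.factorization l = 1 := by rw [hfp, hl]; simp
        have h4 := hdK h
        omega
      · have h3 : p.factorization l = 0 := by
          rw [hfp, Finsupp.single_apply, if_neg (fun hh => hl hh.symm)]
        omega
    have hD1S : D₁ ∈ {D : ℕ | 0 < D ∧
        ∀ h : ℕ, ((D : ℚ) * (hyperY m n r).coeff h).den = 1} :=
      ⟨hD1pos, fun h => (aux_den_mul_nat_eq_one_iff D₁ _).mpr (hdhD1 h)⟩
    have hle : D₀ ≤ D₁ := Nat.sInf_le hD1S
    have : D₁ < D₀ := by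
      rw [hD1]
      calc D₁ < 2 * D₁ := by omega
        _ ≤ p * D₁ := Nat.mul_le_mul_right _ hp.two_le
    omega
  -- convert to the real logarithm bound
  have hnr1 : 1 ≤ n * r := Nat.one_le_iff_ne_zero.mpr (Nat.mul_ne_zero (by omega) (by omega))
  have hplog : (0:ℝ) < Real.log p := Real.log_pos (by exact_mod_cast hp.one_lt)
  have hpow : (p:ℝ) ^ K ≤ ((n*r : ℕ) : ℝ) := by
    exact_mod_cast Nat.pow_log_le_self p (by omega)
  have hlogs : (K : ℝ) * Real.log p ≤ Real.log ((n:ℝ) * (r:ℝ)) := by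
    have : Real.log ((p:ℝ) ^ K) ≤ Real.log (((n*r:ℕ)):ℝ) :=
      Real.log_le_log (pow_pos (by exact_mod_cast hp.pos) K) hpow
    rw [Real.log_pow] at this
    convert this using 2
    push_cast
    ring
  have hfin : (K : ℝ) ≤ Real.log ((n:ℝ) * (r:ℝ)) / Real.log p :=
    (le_div_iff₀ hplog).mpr hlogs
  have : (K : ℤ) ≤ ⌊Real.log ((n : ℝ) * (r : ℝ)) / Real.log (p : ℝ)⌋ :=
    Int.le_floor.mpr (by exact_mod_cast hfin)
  have hcast : (padicValNat p D₀ : ℤ) ≤ (K : ℤ) := by exact_mod_cast hmain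
  omega
end

section
/- Let m, n, r be positive integers with 0 < m < n and gcd(m, n) = 1. If p is a prime greater than (nr)^{1/2} which divides D_{m,n,r}, then p² does not divide D_{m,n,r}, and there exist an integer l with 1 ≤ l < n/2, gcd(l, n) = 1 and l·p ≡ −m (mod n), and a non-negative integer A, such that (nr + m + n)/(nA + n − l) ≤ p ≤ (nr − m)/(nA + l). Moreover, every prime p greater than (nr + m)^{1/2} for which such l and A exist is a divisor of D_{m,n,r}. -/
namespace HyperAux

/-- decomposition determines div and mod -/
lemma div_mod_eq {p : ℕ} (hp : 0 < p) {q s x : ℕ} (hs : s < p) (hx : x = p * q + s) :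
    x / p = q ∧ x % p = s := by
  subst hx
  constructor
  · rw [Nat.mul_add_div hp, Nat.div_eq_of_lt hs, add_zero]
  · rw [Nat.mul_add_mod, Nat.mod_eq_of_lt hs]

/-- number of `i ∈ [1, h]` congruent to `a` mod `p`, for `1 ≤ a ≤ p`. -/
lemma count_res {p : ℕ} (hp : 0 < p) {a : ℕ} (ha1 : 1 ≤ a) (ha2 : a ≤ p) (h : ℕ) :
    ((Finset.Icc 1 h).filter (fun i => i % p = a % p)).card = (h + p - a) / p := by
  induction h with
  | zero =>
    rw [show (0 + p - a) / p = 0 from Nat.div_eq_of_lt (by omega)]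
    simp
  | succ h ih =>
    have key : ((h + 1) % p = a % p) ↔ (p ∣ (h + p - a) + 1) := by
      rw [show (h + p - a) + 1 = (h + 1 + p) - a by omega,
        ← Nat.modEq_iff_dvd' (by omega : a ≤ h + 1 + p)]
      unfold Nat.ModEq
      rw [Nat.add_mod_right]
      exact comm
    rw [show h + 1 + p - a = (h + p - a) + 1 by omega, Nat.succ_div,
      show Finset.Icc 1 (h+1) = insert (h+1) (Finset.Icc 1 h) from
        (Finset.insert_Icc_right_eq_Icc_add_one (by omega)).symm, Finset.filter_insert]
    by_cases hc : (h + 1) % p = a % p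
    · rw [if_pos hc, Finset.card_insert_of_notMem (by simp), ih,
        if_pos (key.mp hc)]
    · rw [if_neg hc, ih, if_neg (fun hd => hc (key.mpr hd)), add_zero]

/-- number of `i ∈ [r-h+1, r]` congruent to `a` mod `p`. -/
lemma count_res_window {p : ℕ} (hp : 0 < p) {a : ℕ} (ha1 : 1 ≤ a) (ha2 : a ≤ p)
    {r h : ℕ} (hhr : h ≤ r) :
    ((Finset.Icc (r - h + 1) r).filter (fun i => i % p = a % p)).card
      = (r + p - a) / p - (r - h + p - a) / p := by
  have hsplit : Finset.Icc 1 (r - h) ∪ Finset.Icc (r - h + 1) r = Finset.Icc 1 r := by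
    rw [Finset.Icc_add_one_left_eq_Ioc, show (1 : ℕ) = 0 + 1 by rfl, Finset.Icc_add_one_left_eq_Ioc, Finset.Icc_add_one_left_eq_Ioc]
    exact Finset.Ioc_union_Ioc_eq_Ioc (by omega) (by omega)
  have hdisj : Disjoint (Finset.Icc 1 (r - h)) (Finset.Icc (r - h + 1) r) := by
    rw [Finset.disjoint_left]
    intro x hx hx'
    simp only [Finset.mem_Icc] at hx hx'
    omega
  have := count_res hp ha1 ha2 r
  rw [← hsplit, Finset.filter_union,
    Finset.card_union_of_disjoint (Finset.disjoint_filter_filter hdisj),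
    count_res hp ha1 ha2 (r - h)] at this
  omega

end HyperAux

namespace HyperAux

lemma central {p α β r h : ℕ} (hp : 0 < p) (ha : 1 ≤ α) (hb : 1 ≤ β) (hab : α + β = p)
    (hhr : h ≤ r) :
    (h + p - α) / p ≤ ((if p ≤ h % p + (r - h) % p then 1 else 0)
      + ((r + p - β) / p - (r - h + p - β) / p)) + 1
    ∧ (((if p ≤ h % p + (r - h) % p then 1 else 0)
      + ((r + p - β) / p - (r - h + p - β) / p)) + 1 ≤ (h + p - α) / p
      → α ≤ r % p ∧ r % p + α < p) := by
  have hap : α < p := by omega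
  have hbp : β < p := by omega
  obtain ⟨Y, hY⟩ : ∃ x, h % p = x := ⟨_, rfl⟩
  obtain ⟨W, hW⟩ : ∃ x, (r - h) % p = x := ⟨_, rfl⟩
  obtain ⟨H1, hH1⟩ : ∃ x, h / p = x := ⟨_, rfl⟩
  obtain ⟨H2, hH2⟩ : ∃ x, (r - h) / p = x := ⟨_, rfl⟩
  have hYp : Y < p := hY ▸ Nat.mod_lt _ hp
  have hWp : W < p := hW ▸ Nat.mod_lt _ hp
  have e1 : h + p - α = h + β := by omega
  have e2 : r - h + p - β = (r - h) + α := by omega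
  have e3 : r + p - β = r + α := by omega
  have d1 : (h + β) / p = H1 + if p ≤ Y + β then 1 else 0 := by
    rw [Nat.add_div hp, Nat.div_eq_of_lt hbp, Nat.mod_eq_of_lt hbp, add_zero, hY, hH1]
  have d2 : ((r - h) + α) / p = H2 + if p ≤ W + α then 1 else 0 := by
    rw [Nat.add_div hp, Nat.div_eq_of_lt hap, Nat.mod_eq_of_lt hap, add_zero, hW, hH2]
  have d0 : r / p = H1 + H2 + if p ≤ Y + W then 1 else 0 := by
    conv_lhs => rw [show r = h + (r - h) by omega]
    rw [Nat.add_div hp, hY, hW, hH1, hH2]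
  have d0' : r % p = if p ≤ Y + W then Y + W - p else Y + W := by
    conv_lhs => rw [show r = h + (r - h) by omega]
    rw [Nat.add_mod, hY, hW]
    split
    · rw [Nat.mod_eq_sub_mod (by omega), Nat.mod_eq_of_lt (by omega)]
    · rw [Nat.mod_eq_of_lt (by omega)]
  have d3 : (r + α) / p = (H1 + H2 + if p ≤ Y + W then 1 else 0)
      + if p ≤ (if p ≤ Y + W then Y + W - p else Y + W) + α then 1 else 0 := by
    rw [Nat.add_div hp, Nat.div_eq_of_lt hap, Nat.mod_eq_of_lt hap, add_zero, d0, d0']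
  rw [e1, e2, e3, d1, d2, d3, hY, hW, d0']
  split_ifs <;> omega

lemma central_pp {p r h : ℕ} (hp : 0 < p) (hhr : h ≤ r) :
    (h + p - p) / p ≤ (if p ≤ h % p + (r - h) % p then 1 else 0)
      + ((r + p - p) / p - (r - h + p - p) / p) := by
  obtain ⟨Y, hY⟩ : ∃ x, h % p = x := ⟨_, rfl⟩
  obtain ⟨W, hW⟩ : ∃ x, (r - h) % p = x := ⟨_, rfl⟩
  obtain ⟨H1, hH1⟩ : ∃ x, h / p = x := ⟨_, rfl⟩
  obtain ⟨H2, hH2⟩ : ∃ x, (r - h) / p = x := ⟨_, rfl⟩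
  have d0 : r / p = H1 + H2 + if p ≤ Y + W then 1 else 0 := by
    conv_lhs => rw [show r = h + (r - h) by omega]
    rw [Nat.add_div hp, hY, hW, hH1, hH2]
  rw [show h + p - p = h by omega, show r + p - p = r by omega,
    show r - h + p - p = r - h by omega, d0, hY, hW, hH1, hH2]
  split_ifs <;> omega

lemma central_eq {p α β r : ℕ} (hp : 0 < p) (ha : 1 ≤ α) (hb : 1 ≤ β) (hab : α + β = p)
    (hαR : α ≤ r % p) (hRα : r % p + α < p) :
    (α + p - α) / p = ((if p ≤ α % p + (r - α) % p then 1 else 0)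
      + ((r + p - β) / p - (r - α + p - β) / p)) + 1 := by
  have hap : α < p := by omega
  have hbp : β < p := by omega
  have hαr : α ≤ r := le_trans hαR (Nat.mod_le r p)
  obtain ⟨W, hW⟩ : ∃ x, (r - α) % p = x := ⟨_, rfl⟩
  obtain ⟨H2, hH2⟩ : ∃ x, (r - α) / p = x := ⟨_, rfl⟩
  have hWp : W < p := hW ▸ Nat.mod_lt _ hp
  have hY : α % p = α := Nat.mod_eq_of_lt hap
  have hH1 : α / p = 0 := Nat.div_eq_of_lt hap
  have e2 : r - α + p - β = (r - α) + α := by omega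
  have e3 : r + p - β = r + α := by omega
  have d2 : ((r - α) + α) / p = H2 + if p ≤ W + α then 1 else 0 := by
    rw [Nat.add_div hp, Nat.div_eq_of_lt hap, Nat.mod_eq_of_lt hap, add_zero, hW, hH2]
  have d0 : r / p = 0 + H2 + if p ≤ α + W then 1 else 0 := by
    conv_lhs => rw [show r = α + (r - α) by omega]
    rw [Nat.add_div hp, hY, hW, hH1, hH2]
  have d0' : r % p = if p ≤ α + W then α + W - p else α + W := by
    conv_lhs => rw [show r = α + (r - α) by omega]
    rw [Nat.add_mod, hY, hW]
    split
    · rw [Nat.mod_eq_sub_mod (by omega), Nat.mod_eq_of_lt (by omega)]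
    · rw [Nat.mod_eq_of_lt (by omega)]
  have d3 : (r + α) / p = (0 + H2 + if p ≤ α + W then 1 else 0)
      + if p ≤ (if p ≤ α + W then α + W - p else α + W) + α then 1 else 0 := by
    rw [Nat.add_div hp, Nat.div_eq_of_lt hap, Nat.mod_eq_of_lt hap, add_zero, d0, d0']
  rw [d0'] at hαR hRα
  rw [show α + p - α = p by omega, Nat.div_self hp, e2, e3, d2, d3, hY, hW]
  split_ifs at * <;> omega

end HyperAux


namespace HyperAux

lemma val_eq_ite {p : ℕ} (hp : p.Prime) {x : ℕ} (hx : 0 < x) (hx2 : x < p ^ 2) :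
    padicValNat p x = if p ∣ x then 1 else 0 := by
  haveI := Fact.mk hp
  split
  · next hd =>
    have h1 : 1 ≤ padicValNat p x := by
      rw [← padicValNat_dvd_iff_le (by omega)]
      simpa using hd
    have h2 : ¬ (2 ≤ padicValNat p x) := by
      rw [← padicValNat_dvd_iff_le (by omega)]
      intro hdd
      exact absurd (Nat.le_of_dvd hx hdd) (by omega)
    omega
  · next hd => exact padicValNat.eq_zero_of_not_dvd hd

lemma val_prod_eq {p : ℕ} (hp : p.Prime) {s : Finset ℕ} {f : ℕ → ℕ}
    (hf : ∀ i ∈ s, 0 < f i) :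
    padicValNat p (∏ i ∈ s, f i) = ∑ i ∈ s, padicValNat p (f i) := by
  haveI := Fact.mk hp
  classical
  induction s using Finset.cons_induction with
  | empty => simp
  | cons a s ha ih =>
    rw [Finset.prod_cons, Finset.sum_cons,
      padicValNat.mul (by have := hf a (Finset.mem_cons_self a s); omega)
        (by
          have : 0 < ∏ i ∈ s, f i :=
            Finset.prod_pos (fun i hi => hf i (Finset.mem_cons_of_mem hi))
          omega),
      ih (fun i hi => hf i (Finset.mem_cons_of_mem hi))]

lemma val_prod_count {p : ℕ} (hp : p.Prime) {s : Finset ℕ} {f : ℕ → ℕ}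
    (hpos : ∀ i ∈ s, 0 < f i) (hlt : ∀ i ∈ s, f i < p ^ 2) :
    padicValNat p (∏ i ∈ s, f i) = (s.filter (fun i => p ∣ f i)).card := by
  classical
  rw [val_prod_eq hp hpos, Finset.card_filter]
  exact Finset.sum_congr rfl (fun i hi => val_eq_ite hp (hpos i hi) (hlt i hi))

lemma val_prod_ge_count {p : ℕ} (hp : p.Prime) {s : Finset ℕ} {f : ℕ → ℕ}
    (hpos : ∀ i ∈ s, 0 < f i) :
    (s.filter (fun i => p ∣ f i)).card ≤ padicValNat p (∏ i ∈ s, f i) := by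
  haveI := Fact.mk hp
  classical
  rw [val_prod_eq hp hpos, Finset.card_filter]
  apply Finset.sum_le_sum
  intro i hi
  split
  · next hd =>
    have hne : f i ≠ 0 := by have := hpos i hi; omega
    have hd1 : p ^ 1 ∣ f i := by simpa using hd
    exact (padicValNat_dvd_iff_le hne).mp hd1
  · exact Nat.zero_le _

lemma dvd_sub_iff_res {p m n α i : ℕ} (hp : p.Prime) (hpn : ¬ p ∣ n)
    (hmα : m ≤ n * α) (hα : p ∣ n * α - m) (hmi : m ≤ n * i) :
    p ∣ n * i - m ↔ i % p = α % p := by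
  have hcop : Nat.gcd p n = 1 := (Nat.Prime.coprime_iff_not_dvd hp).mpr hpn
  have h1 : (m ≡ n * α [MOD p]) := (Nat.modEq_iff_dvd' hmα).mpr hα
  constructor
  · intro hd
    have h2 : m ≡ n * i [MOD p] := (Nat.modEq_iff_dvd' hmi).mpr hd
    have h3 : n * α ≡ n * i [MOD p] := h1.symm.trans h2
    exact (Nat.ModEq.cancel_left_of_coprime hcop h3).symm
  · intro hres
    have h3 : n * i ≡ n * α [MOD p] := Nat.ModEq.mul_left n hres
    exact (Nat.modEq_iff_dvd' hmi).mp (h1.trans h3.symm)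

lemma dvd_add_iff_res {p m n β i : ℕ} (hp : p.Prime) (hpn : ¬ p ∣ n)
    (hβ : p ∣ n * β + m) :
    p ∣ n * i + m ↔ i % p = β % p := by
  have hcop : Nat.gcd p n = 1 := (Nat.Prime.coprime_iff_not_dvd hp).mpr hpn
  have hA : n * β + m ≡ 0 [MOD p] := (Nat.modEq_zero_iff_dvd).mpr hβ
  constructor
  · intro hd
    have h2 : n * i + m ≡ n * β + m [MOD p] :=
      ((Nat.modEq_zero_iff_dvd).mpr hd).trans hA.symm
    have h3 : n * i ≡ n * β [MOD p] := h2.add_right_cancel' m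
    exact Nat.ModEq.cancel_left_of_coprime hcop h3
  · intro hres
    have h3 : n * i + m ≡ n * β + m [MOD p] := (Nat.ModEq.mul_left n hres).add_right m
    exact (Nat.modEq_zero_iff_dvd).mp (h3.trans hA)

lemma val_choose {p r h : ℕ} (hp : p.Prime) (hhr : h ≤ r) (hr0 : 0 < r) (hrp : r < p ^ 2) :
    padicValNat p (r.choose h) = if p ≤ h % p + (r - h) % p then 1 else 0 := by
  haveI := Fact.mk hp
  rw [padicValNat_choose hhr (Nat.log_lt_of_lt_pow (by omega) hrp)]
  rw [show Finset.Ico 1 2 = {1} from rfl, Finset.filter_singleton]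
  simp only [pow_one]
  split_ifs <;> simp

lemma pow_dvd_den_iff {p : ℕ} (hp : p.Prime) {k a b : ℕ} (hk : 1 ≤ k) (ha : a ≠ 0) (hb : b ≠ 0) :
    p ^ k ∣ ((a : ℚ) / (b : ℚ)).den ↔ padicValNat p a + k ≤ padicValNat p b := by
  haveI := Fact.mk hp
  have hq : (a : ℚ) / (b : ℚ) ≠ 0 :=
    div_ne_zero (Nat.cast_ne_zero.mpr ha) (Nat.cast_ne_zero.mpr hb)
  have hval : padicValRat p ((a : ℚ) / (b : ℚ))
      = (padicValNat p a : ℤ) - padicValNat p b := by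
    rw [padicValRat.div (Nat.cast_ne_zero.mpr ha) (Nat.cast_ne_zero.mpr hb),
      ← padicValRat_of_nat, ← padicValRat_of_nat]
  set q : ℚ := (a : ℚ) / (b : ℚ) with hqdef
  have hden0 : q.den ≠ 0 := q.den_nz
  by_cases hpd : p ∣ q.den
  · have hnum : ¬ p ∣ q.num.natAbs := by
      intro hc
      have := Nat.dvd_gcd hc hpd
      rw [Nat.Coprime.gcd_eq_one q.reduced] at this
      exact Nat.Prime.one_lt hp |>.ne' (Nat.dvd_one.mp this)
    have h0 : padicValInt p q.num = 0 := padicValNat.eq_zero_of_not_dvd hnum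
    have hv : padicValRat p q = - (padicValNat p q.den : ℤ) := by
      unfold padicValRat
      rw [h0]
      simp
    have hiff : p ^ k ∣ q.den ↔ k ≤ padicValNat p q.den := padicValNat_dvd_iff_le hden0
    rw [hiff]
    rw [hv] at hval
    omega
  · have hd0 : padicValNat p q.den = 0 := padicValNat.eq_zero_of_not_dvd hpd
    have hL : ¬ p ^ k ∣ q.den := fun hc => hpd (dvd_trans (dvd_pow_self p (by omega)) hc)
    have hv : padicValRat p q = (padicValInt p q.num : ℤ) := by
      unfold padicValRat
      rw [hd0]
      simp
    rw [hv] at hval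
    constructor
    · intro hc; exact absurd hc hL
    · intro hc
      exfalso
      have : (0 : ℤ) ≤ (padicValInt p q.num : ℤ) := Int.natCast_nonneg _
      omega

end HyperAux

namespace HyperAux

lemma den_mul_nat_eq_one_iff (q : ℚ) (D : ℕ) (hD : 0 < D) :
    ((D : ℚ) * q).den = 1 ↔ q.den ∣ D := by
  constructor
  · intro h
    set z : ℤ := ((D : ℚ) * q).num with hz
    have hzq : (z : ℚ) = (D : ℚ) * q := Rat.den_eq_one_iff _ |>.mp h
    have hq : q = (z : ℚ) / ((D : ℤ) : ℚ) := by
      rw [hzq]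
      push_cast
      field_simp
    have := Rat.den_dvd z (D : ℤ)
    rw [Rat.divInt_eq_div, ← hq] at this
    exact_mod_cast this
  · rintro ⟨t, ht⟩
    have hden : ((q.den : ℚ)) ≠ 0 := by
      exact_mod_cast q.den_nz
    have key : (q.den : ℚ) * q = (q.num : ℚ) := by
      nth_rewrite 2 [← Rat.num_div_den q]
      rw [mul_comm, div_mul_cancel₀ _ hden]
    have : (D : ℚ) * q = ((t * q.num : ℤ) : ℚ) := by
      subst ht
      push_cast
      calc ((q.den : ℚ)) * (t : ℚ) * q = (t : ℚ) * ((q.den : ℚ) * q) := by ring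
      _ = (t : ℚ) * (q.num : ℚ) := by rw [key]
    rw [this, Rat.den_intCast]

lemma finset_lcm_ne_zero {s : Finset ℕ} {f : ℕ → ℕ} (hf : ∀ i ∈ s, f i ≠ 0) :
    s.lcm f ≠ 0 := by
  classical
  induction s using Finset.induction_on with
  | empty => simp
  | insert _ _ ha ih =>
    rw [Finset.lcm_insert]
    intro h
    rcases lcm_eq_zero_iff _ _ |>.mp h with h' | h'
    · exact hf _ (Finset.mem_insert_self _ _) h'
    · exact ih (fun i hi => hf i (Finset.mem_insert_of_mem hi)) h'

lemma pow_dvd_lcm_iff {p k a b : ℕ} (hp : p.Prime) (ha : a ≠ 0) (hb : b ≠ 0) :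
    p ^ k ∣ Nat.lcm a b ↔ p ^ k ∣ a ∨ p ^ k ∣ b := by
  rw [Nat.Prime.pow_dvd_iff_le_factorization hp (Nat.lcm_ne_zero ha hb),
    Nat.factorization_lcm ha hb, Finsupp.sup_apply, le_sup_iff,
    ← Nat.Prime.pow_dvd_iff_le_factorization hp ha,
    ← Nat.Prime.pow_dvd_iff_le_factorization hp hb]

lemma pow_dvd_finset_lcm {p k : ℕ} (hp : p.Prime) (hk : 1 ≤ k) {s : Finset ℕ} {f : ℕ → ℕ}
    (hf : ∀ i ∈ s, f i ≠ 0) :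
    p ^ k ∣ s.lcm f ↔ ∃ i ∈ s, p ^ k ∣ f i := by
  classical
  induction s using Finset.induction_on with
  | empty =>
    simp only [Finset.lcm_empty]
    constructor
    · intro h
      have h1 : p ^ k = 1 := Nat.dvd_one.mp h
      exfalso
      have : 2 ≤ p := hp.two_le
      have : p ≤ p ^ k := Nat.le_self_pow (by omega) p
      omega
    · rintro ⟨i, hi, -⟩
      exact absurd hi (Finset.notMem_empty i)
  | @insert a s ha ih =>
    rw [Finset.lcm_insert, show (lcm (f a) (s.lcm f) : ℕ) = Nat.lcm (f a) (s.lcm f) from rfl,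
      pow_dvd_lcm_iff hp (hf a (Finset.mem_insert_self a s))
        (finset_lcm_ne_zero (fun i hi => hf i (Finset.mem_insert_of_mem hi))),
      ih (fun i hi => hf i (Finset.mem_insert_of_mem hi))]
    constructor
    · rintro (h | ⟨i, hi, h⟩)
      · exact ⟨a, Finset.mem_insert_self a s, h⟩
      · exact ⟨i, Finset.mem_insert_of_mem hi, h⟩
    · rintro ⟨i, hi, h⟩
      rcases Finset.mem_insert.mp hi with rfl | hi'
      · exact Or.inl h
      · exact Or.inr ⟨i, hi', h⟩

def Mden (m n h : ℕ) : ℕ := ∏ i ∈ Finset.Icc 1 h, (i * n - m)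

def Nnum (m n r h : ℕ) : ℕ := ∏ i ∈ Finset.Icc (r - h + 1) r, (i * n + m)

lemma coeff_hyperY {m n r : ℕ} (hmn2 : m < n) {h : ℕ} (hh : h ≤ r) :
    (hyperY m n r).coeff h
      = ((r.choose h * Nnum m n r h : ℕ) : ℚ) / ((Mden m n h : ℕ) : ℚ) := by
  unfold hyperY
  rw [Polynomial.finset_sum_coeff]
  simp only [Polynomial.coeff_C_mul, Polynomial.coeff_X_pow]
  rw [Finset.sum_eq_single_of_mem h (by simp [Nat.lt_succ_iff, hh])
    (fun b _ hb => by rw [if_neg (fun he => hb he.symm), mul_zero])]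
  rw [if_pos rfl, mul_one]
  have hM : (∏ i ∈ Finset.Icc 1 h, ((i : ℚ) * n - m)) = ((Mden m n h : ℕ) : ℚ) := by
    unfold Mden
    rw [Nat.cast_prod]
    apply Finset.prod_congr rfl
    intro i hi
    have hi1 : 1 ≤ i := (Finset.mem_Icc.mp hi).1
    have hle : m ≤ i * n := le_trans (le_of_lt hmn2) (Nat.le_mul_of_pos_left n (by omega))
    rw [Nat.cast_sub hle]
    push_cast
    ring
  have hN : (∏ i ∈ Finset.Icc (r - h + 1) r, ((i : ℚ) * n + m))
      = ((Nnum m n r h : ℕ) : ℚ) := by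
    unfold Nnum
    rw [Nat.cast_prod]
    apply Finset.prod_congr rfl
    intro i hi
    push_cast
    ring
  rw [hM, hN]
  push_cast
  ring

lemma coeff_hyperY_zero {m n r h : ℕ} (hh : r < h) : (hyperY m n r).coeff h = 0 := by
  unfold hyperY
  rw [Polynomial.finset_sum_coeff]
  apply Finset.sum_eq_zero
  intro i hi
  simp only [Polynomial.coeff_C_mul, Polynomial.coeff_X_pow]
  rw [if_neg (by simp only [Finset.mem_range] at hi; omega), mul_zero]

lemma pow_dvd_hyperD_iff {m n r p k : ℕ} (hp : p.Prime) (hk : 1 ≤ k) :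
    p ^ k ∣ hyperD m n r ↔ ∃ h, h ≤ r ∧ p ^ k ∣ ((hyperY m n r).coeff h).den := by
  classical
  set f : ℕ → ℕ := fun h => ((hyperY m n r).coeff h).den with hf
  have hfne : ∀ h, f h ≠ 0 := fun h => Rat.den_nz _
  set D0 := (Finset.range (r + 1)).lcm f with hD0
  have hD0ne : D0 ≠ 0 := finset_lcm_ne_zero (fun i _ => hfne i)
  have hmem : ∀ D : ℕ,
      (0 < D ∧ ∀ h : ℕ, ((D : ℚ) * (hyperY m n r).coeff h).den = 1)
        ↔ (0 < D ∧ ∀ h : ℕ, f h ∣ D) := by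
    intro D
    constructor
    · rintro ⟨h1, h2⟩
      exact ⟨h1, fun h => (den_mul_nat_eq_one_iff _ _ h1).mp (h2 h)⟩
    · rintro ⟨h1, h2⟩
      exact ⟨h1, fun h => (den_mul_nat_eq_one_iff _ _ h1).mpr (h2 h)⟩
  have hD0S : 0 < D0 ∧ ∀ h : ℕ, ((D0 : ℚ) * (hyperY m n r).coeff h).den = 1 := by
    rw [hmem]
    refine ⟨Nat.pos_of_ne_zero hD0ne, fun h => ?_⟩
    by_cases hhr : h ≤ r
    · exact Finset.dvd_lcm (by simp [Nat.lt_succ_iff, hhr])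
    · have : f h = 1 := by
        show ((hyperY m n r).coeff h).den = 1
        rw [coeff_hyperY_zero (by omega)]
        rfl
      rw [this]
      exact one_dvd _
  have hDeq : hyperD m n r = D0 := by
    unfold hyperD
    apply le_antisymm
    · exact Nat.sInf_le hD0S
    · have hne : {D : ℕ | 0 < D ∧ ∀ h : ℕ, ((D : ℚ) * (hyperY m n r).coeff h).den = 1}.Nonempty :=
        ⟨D0, hD0S⟩
      have hmem1 := Nat.sInf_mem hne
      obtain ⟨hpos, hdvd⟩ := (hmem _).mp hmem1
      exact Nat.le_of_dvd hpos (Finset.lcm_dvd (fun b _ => hdvd b))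
  rw [hDeq, pow_dvd_finset_lcm hp hk (fun i _ => hfne i)]
  constructor
  · rintro ⟨i, hi, h⟩
    exact ⟨i, by simpa [Nat.lt_succ_iff] using hi, h⟩
  · rintro ⟨i, hi, h⟩
    exact ⟨i, by simp [Nat.lt_succ_iff, hi], h⟩

end HyperAux


namespace HyperAux

lemma vden_eq {m n r p h α : ℕ} (hp : p.Prime) (hm : 0 < m) (hmn : m < n) (hhr : h ≤ r)
    (hpn : ¬ p ∣ n) (hp2 : n * r < p ^ 2) (hα1 : 1 ≤ α) (hαp : α ≤ p)
    (hmα : m ≤ n * α) (hdvd : p ∣ n * α - m) :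
    padicValNat p (Mden m n h) = (h + p - α) / p := by
  have hppos : 0 < p := hp.pos
  unfold Mden
  rw [val_prod_count hp
      (fun i hi => by
        have hi1 := (Finset.mem_Icc.mp hi).1
        have h2 : n ≤ i * n := Nat.le_mul_of_pos_left n (by omega)
        omega)
      (fun i hi => by
        have hi2 := (Finset.mem_Icc.mp hi).2
        have h2 : i * n ≤ r * n := Nat.mul_le_mul_right n (by omega)
        have h3 : r * n = n * r := Nat.mul_comm r n
        omega)]
  have hfilter : Finset.filter (fun i => p ∣ i * n - m) (Finset.Icc 1 h)
      = Finset.filter (fun i => i % p = α % p) (Finset.Icc 1 h) := by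
    apply Finset.filter_congr
    intro i hi
    rw [Nat.mul_comm i n]
    exact dvd_sub_iff_res hp hpn hmα hdvd
      (le_trans (le_of_lt hmn)
        (Nat.le_mul_of_pos_right n (by
          have hi1 := (Finset.mem_Icc.mp hi).1; omega)))
  rw [hfilter, count_res hppos hα1 hαp h]

lemma vnum_ge {m n r p h β : ℕ} (hp : p.Prime) (hm : 0 < m) (hn : 0 < n) (hr : 0 < r)
    (hhr : h ≤ r) (hpn : ¬ p ∣ n) (hp2 : n * r < p ^ 2) (hβ1 : 1 ≤ β) (hβp : β ≤ p)
    (hdvd : p ∣ n * β + m) :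
    (if p ≤ h % p + (r - h) % p then 1 else 0) + ((r + p - β) / p - (r - h + p - β) / p)
      ≤ padicValNat p (r.choose h * Nnum m n r h) := by
  have hppos : 0 < p := hp.pos
  haveI := Fact.mk hp
  have hch : r.choose h ≠ 0 := (Nat.choose_pos hhr).ne'
  have hNpos : 0 < Nnum m n r h :=
    Finset.prod_pos (fun i hi => by omega)
  rw [padicValNat.mul hch hNpos.ne']
  have h1 : padicValNat p (r.choose h) = if p ≤ h % p + (r - h) % p then 1 else 0 :=
    val_choose hp hhr hr (by
      have : r ≤ n * r := Nat.le_mul_of_pos_left r hn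
      omega)
  rw [h1]
  have h2 : (r + p - β) / p - (r - h + p - β) / p ≤ padicValNat p (Nnum m n r h) := by
    unfold Nnum
    refine le_trans ?_ (val_prod_ge_count hp (fun i hi => by omega))
    have hfilter : Finset.filter (fun i => p ∣ i * n + m) (Finset.Icc (r - h + 1) r)
        = Finset.filter (fun i => i % p = β % p) (Finset.Icc (r - h + 1) r) := by
      apply Finset.filter_congr
      intro i hi
      rw [Nat.mul_comm i n]
      exact dvd_add_iff_res hp hpn hdvd
    rw [hfilter, count_res_window hppos hβ1 hβp hhr]
  omega

lemma vnum_eq {m n r p h β : ℕ} (hp : p.Prime) (hm : 0 < m) (hn : 0 < n) (hr : 0 < r)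
    (hhr : h ≤ r) (hpn : ¬ p ∣ n) (hp2' : n * r + m < p ^ 2) (hβ1 : 1 ≤ β) (hβp : β ≤ p)
    (hdvd : p ∣ n * β + m) :
    padicValNat p (r.choose h * Nnum m n r h)
      = (if p ≤ h % p + (r - h) % p then 1 else 0)
        + ((r + p - β) / p - (r - h + p - β) / p) := by
  have hppos : 0 < p := hp.pos
  haveI := Fact.mk hp
  have hch : r.choose h ≠ 0 := (Nat.choose_pos hhr).ne'
  have hNpos : 0 < Nnum m n r h :=
    Finset.prod_pos (fun i hi => by omega)
  rw [padicValNat.mul hch hNpos.ne']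
  have h1 : padicValNat p (r.choose h) = if p ≤ h % p + (r - h) % p then 1 else 0 :=
    val_choose hp hhr hr (by
      have : r ≤ n * r := Nat.le_mul_of_pos_left r hn
      omega)
  rw [h1]
  have h2 : padicValNat p (Nnum m n r h) = (r + p - β) / p - (r - h + p - β) / p := by
    unfold Nnum
    rw [val_prod_count hp (fun i hi => by omega)
      (fun i hi => by
        have hi2 := (Finset.mem_Icc.mp hi).2
        have h2 : i * n ≤ r * n := Nat.mul_le_mul_right n (by omega)
        have h3 : r * n = n * r := Nat.mul_comm r n
        omega)]
    have hfilter : Finset.filter (fun i => p ∣ i * n + m) (Finset.Icc (r - h + 1) r)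
        = Finset.filter (fun i => i % p = β % p) (Finset.Icc (r - h + 1) r) := by
      apply Finset.filter_congr
      intro i hi
      rw [Nat.mul_comm i n]
      exact dvd_add_iff_res hp hpn hdvd
    rw [hfilter, count_res_window hppos hβ1 hβp hhr]
  omega


end HyperAux

set_option maxHeartbeats 2000000 in
open HyperAux in
/-- **Lemma 2(b).** If a prime `p > (nr)^{1/2}` divides `D_{m,n,r}`, then
`p²` does not divide `D_{m,n,r}` and there are `1 ≤ l < n/2` with `gcd(l,n) = 1`,
`l·p ≡ −m (mod n)`, and a non-negative integer `A` with
`(nr + m + n)/(nA + n − l) ≤ p ≤ (nr − m)/(nA + l)`. Moreover, every such prime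
greater than `(nr + m)^{1/2}` divides `D_{m,n,r}`. -/
theorem hyperD_large_prime_divisors (m n r : ℕ) (hm : 0 < m) (hmn : m < n)
    (hg : Nat.gcd m n = 1) (hr : 0 < r) :
    (∀ p : ℕ, p.Prime → Real.sqrt ((n : ℝ) * r) < (p : ℝ) → p ∣ hyperD m n r →
      ¬ p ^ 2 ∣ hyperD m n r ∧
      ∃ l A : ℕ, 1 ≤ l ∧ (l : ℝ) < (n : ℝ) / 2 ∧ Nat.gcd l n = 1 ∧
        n ∣ (l * p + m) ∧
        ((n : ℝ) * r + m + n) / ((n : ℝ) * A + n - l) ≤ (p : ℝ) ∧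
        (p : ℝ) ≤ ((n : ℝ) * r - m) / ((n : ℝ) * A + l)) ∧
    (∀ p : ℕ, p.Prime → Real.sqrt ((n : ℝ) * r + m) < (p : ℝ) →
      (∃ l A : ℕ, 1 ≤ l ∧ (l : ℝ) < (n : ℝ) / 2 ∧ Nat.gcd l n = 1 ∧
        n ∣ (l * p + m) ∧
        ((n : ℝ) * r + m + n) / ((n : ℝ) * A + n - l) ≤ (p : ℝ) ∧
        (p : ℝ) ≤ ((n : ℝ) * r - m) / ((n : ℝ) * A + l)) →
      p ∣ hyperD m n r) := by
  have hn0 : 0 < n := by omega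
  constructor
  · -- forward direction
    intro p hp hsq hpdvd
    haveI := Fact.mk hp
    haveI : NeZero p := ⟨hp.pos.ne'⟩
    have hppos : 0 < p := hp.pos
    have hp2 : n * r < p ^ 2 := by
      have h1 : ((n : ℝ) * r) < (p : ℝ) ^ 2 :=
        (Real.sqrt_lt' (by exact_mod_cast hppos)).mp hsq
      have h2 : ((n * r : ℕ) : ℝ) < ((p ^ 2 : ℕ) : ℝ) := by push_cast; linarith
      exact_mod_cast h2
    obtain ⟨h0, hh0r, hden⟩ := (pow_dvd_hyperD_iff hp le_rfl).mp (by simpa using hpdvd)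
    rw [coeff_hyperY hmn hh0r] at hden
    have hchne : r.choose h0 * Nnum m n r h0 ≠ 0 := by
      have h1 : 0 < r.choose h0 := Nat.choose_pos hh0r
      have h2 : 0 < Nnum m n r h0 := Finset.prod_pos (fun i hi => by omega)
      exact Nat.mul_ne_zero h1.ne' h2.ne'
    have hMpos : ∀ h1 : ℕ, 0 < Mden m n h1 := by
      intro h1
      apply Finset.prod_pos
      intro i hi
      have hi1 := (Finset.mem_Icc.mp hi).1
      have h2 : n ≤ i * n := Nat.le_mul_of_pos_left n (by omega)
      omega
    have hval := (pow_dvd_den_iff hp le_rfl hchne (hMpos h0).ne').mp hden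
    have hpn : ¬ p ∣ n := by
      intro hpnn
      have hM1 : p ∣ Mden m n h0 := by
        have h1 : 1 ≤ padicValNat p (Mden m n h0) := by omega
        have h2 := (padicValNat_dvd_iff_le (hMpos h0).ne').mpr h1
        simpa using h2
      obtain ⟨i, hi, hdvd'⟩ := (Nat.Prime.prime hp).exists_mem_finset_dvd hM1
      have hi1 := (Finset.mem_Icc.mp hi).1
      have hmi : m ≤ i * n :=
        le_trans (le_of_lt hmn) (Nat.le_mul_of_pos_left n (by omega))
      have hpm' : p ∣ m := by
        have h2 : p ∣ i * n := Dvd.dvd.mul_left hpnn i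
        have h3 : i * n - (i * n - m) = m := by omega
        rw [← h3]
        exact Nat.dvd_sub h2 hdvd'
      have h4 := Nat.dvd_gcd hpm' hpnn
      rw [hg] at h4
      exact hp.one_lt.ne' (Nat.dvd_one.mp h4)
    have hpm : ¬ p ∣ m := by
      intro hpm
      have hvden : padicValNat p (Mden m n h0) = (h0 + p - p) / p :=
        vden_eq hp hm hmn hh0r hpn hp2 (by omega) le_rfl
          (le_trans (le_of_lt hmn) (Nat.le_mul_of_pos_right n hppos))
          (Nat.dvd_sub (dvd_mul_left p n) hpm)
      have hvnum := vnum_ge (β := p) hp hm hn0 hr hh0r hpn hp2 (by omega) le_rfl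
        (dvd_add (dvd_mul_left p n) hpm)
      have hcpp := central_pp (p := p) (r := r) (h := h0) hppos hh0r
      omega
    -- construct α
    obtain ⟨α, hαlt, hmod⟩ : ∃ α, α < p ∧ n * α ≡ m [MOD p] := by
      have hnz : (n : ZMod p) ≠ 0 := by
        rw [Ne, ZMod.natCast_eq_zero_iff]
        exact hpn
      refine ⟨((m : ZMod p) * (n : ZMod p)⁻¹).val, ZMod.val_lt _, ?_⟩
      have hcast : ((n * ((m : ZMod p) * (n : ZMod p)⁻¹).val : ℕ) : ZMod p)
          = ((m : ℕ) : ZMod p) := by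
        push_cast
        rw [ZMod.natCast_val, ZMod.cast_id,
          mul_comm (m : ZMod p) ((n : ZMod p))⁻¹, ← mul_assoc,
          mul_inv_cancel₀ hnz, one_mul]
      exact (ZMod.natCast_eq_natCast_iff _ _ _).mp hcast
    have hα1 : 1 ≤ α := by
      by_contra hc
      have hα0 : α = 0 := by omega
      rw [hα0, Nat.mul_zero] at hmod
      have h2 : m % p = 0 := by
        have := hmod.symm
        unfold Nat.ModEq at this
        simpa using this
      exact hpm (Nat.dvd_of_mod_eq_zero h2)
    have hmα : m ≤ n * α :=
      le_trans (le_of_lt hmn) (Nat.le_mul_of_pos_right n (by omega))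
    have hdvdα : p ∣ n * α - m := (Nat.modEq_iff_dvd' hmα).mp hmod.symm
    set β := p - α with hβdef
    have hβ1 : 1 ≤ β := by omega
    have hab : α + β = p := by omega
    have hsum : n * β + n * α = n * p := by
      rw [← Nat.mul_add]
      congr 1
      omega
    have hdvdβ : p ∣ n * β + m := by
      obtain ⟨c, hc⟩ := hdvdα
      have key : ∀ X Y Z W : ℕ, Y + X = Z → m ≤ X → X - m = W → Y + m = Z - W := by
        intros; omega
      rw [key (n * α) (n * β) (n * p) (p * c) hsum hmα hc]
      exact Nat.dvd_sub (dvd_mul_left p n) (Dvd.intro c rfl)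
    have hvden := vden_eq hp hm hmn hh0r hpn hp2 hα1 (le_of_lt hαlt) hmα hdvdα
    have hvnum := vnum_ge hp hm hn0 hr hh0r hpn hp2 hβ1 (by omega) hdvdβ
    have hcent := central (α := α) (β := β) hppos hα1 hβ1 hab hh0r
    obtain ⟨hαR, hRα⟩ := hcent.2 (by omega)
    constructor
    · -- ¬ p^2 ∣ hyperD
      intro hsq2
      obtain ⟨h1, hh1r, hden2⟩ := (pow_dvd_hyperD_iff hp (by omega : 1 ≤ 2)).mp hsq2
      rw [coeff_hyperY hmn hh1r] at hden2
      have hchne1 : r.choose h1 * Nnum m n r h1 ≠ 0 := by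
        have hx1 : 0 < r.choose h1 := Nat.choose_pos hh1r
        have hx2 : 0 < Nnum m n r h1 := Finset.prod_pos (fun i hi => by omega)
        exact Nat.mul_ne_zero hx1.ne' hx2.ne'
      have hval2 := (pow_dvd_den_iff hp (by omega : 1 ≤ 2) hchne1 (hMpos h1).ne').mp hden2
      have hvden1 := vden_eq hp hm hmn hh1r hpn hp2 hα1 (le_of_lt hαlt) hmα hdvdα
      have hvnum1 := vnum_ge hp hm hn0 hr hh1r hpn hp2 hβ1 (by omega) hdvdβ
      have hcent1 := (central (α := α) (β := β) hppos hα1 hβ1 hab hh1r).1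
      omega
    · -- existence of l, A
      obtain ⟨L, hL⟩ := hdvdα
      have e1 : p * L + m = n * α := ((Nat.sub_eq_iff_eq_add hmα).mp hL).symm
      have hL1 : 1 ≤ L := by
        rcases Nat.eq_zero_or_pos L with h0' | h0'
        · exfalso
          rw [h0', Nat.mul_zero, Nat.zero_add] at e1
          have h2 : n ≤ n * α := Nat.le_mul_of_pos_right n (by omega)
          rw [← e1] at h2
          omega
        · exact h0'
      have h2α : 2 * α < p := by omega
      have hLn : 2 * L < n := by
        by_contra hc
        push_neg at hc
        have c1 : n * (2 * α) < n * p := mul_lt_mul_of_pos_left h2α hn0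
        have c4 : n * (2 * α) = 2 * (n * α) := by ring
        rw [c4, ← e1] at c1
        have c2 : n * p ≤ 2 * L * p := Nat.mul_le_mul_right p hc
        have c3 : 2 * L * p = 2 * (p * L) := by ring
        rw [c3] at c2
        linarith
      have hgcd : Nat.gcd L n = 1 := by
        have hd1 : Nat.gcd L n ∣ L := Nat.gcd_dvd_left L n
        have hd2 : Nat.gcd L n ∣ n := Nat.gcd_dvd_right L n
        have hdm : Nat.gcd L n ∣ m := by
          have hsub : m = n * α - p * L := by
            rw [← e1, Nat.add_sub_cancel_left]
          rw [hsub]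
          exact Nat.dvd_sub (hd2.mul_right α) (hd1.mul_left p)
        have hfin := Nat.dvd_gcd hdm hd2
        rw [hg] at hfin
        exact Nat.dvd_one.mp hfin
      refine ⟨L, r / p, hL1, ?_, hgcd, ⟨α, by rw [Nat.mul_comm L p]; exact e1⟩, ?_, ?_⟩
      · -- L < n/2 over ℝ
        have : ((2 * L : ℕ) : ℝ) < ((n : ℕ) : ℝ) := by exact_mod_cast hLn
        push_cast at this ⊢
        linarith
      · -- left inequality
        have hDM : p * (r / p) + r % p = r := Nat.div_add_mod r p
        have fR : (p : ℝ) * (r / p : ℕ) + (r % p : ℕ) = (r : ℝ) := by exact_mod_cast hDM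
        have f2 : ((α : ℕ) : ℝ) ≤ ((r % p : ℕ) : ℝ) := by exact_mod_cast hαR
        have f3 : ((r % p : ℕ) : ℝ) + (α : ℝ) + 1 ≤ (p : ℝ) := by
          have : r % p + α + 1 ≤ p := by omega
          exact_mod_cast this
        have f4 : (p : ℝ) * L + m = (n : ℝ) * α := by exact_mod_cast e1
        have fn0 : (0 : ℝ) < n := by exact_mod_cast hn0
        have key1 : (n : ℝ) * (((r % p : ℕ) : ℝ) + (α : ℝ) + 1) ≤ (n : ℝ) * p :=
          mul_le_mul_of_nonneg_left f3 (le_of_lt fn0)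
        have hLr : ((L : ℕ) : ℝ) < (n : ℝ) := by
          have : (L : ℕ) < n := by omega
          exact_mod_cast this
        have hd1 : (0 : ℝ) < (n : ℝ) * (r / p : ℕ) + n - L := by
          have h5 : (0 : ℝ) ≤ (n : ℝ) * (r / p : ℕ) := by positivity
          linarith
        have fRn : (n : ℝ) * ((p : ℝ) * (r / p : ℕ)) + (n : ℝ) * ((r % p : ℕ) : ℝ)
            = (n : ℝ) * r := by rw [← mul_add, fR]
        rw [div_le_iff₀ hd1]
        nlinarith [fRn, key1, f4]
      · -- right inequality
        have hDM : p * (r / p) + r % p = r := Nat.div_add_mod r p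
        have fR : (p : ℝ) * (r / p : ℕ) + (r % p : ℕ) = (r : ℝ) := by exact_mod_cast hDM
        have f2 : ((α : ℕ) : ℝ) ≤ ((r % p : ℕ) : ℝ) := by exact_mod_cast hαR
        have f4 : (p : ℝ) * L + m = (n : ℝ) * α := by exact_mod_cast e1
        have fn0 : (0 : ℝ) < n := by exact_mod_cast hn0
        have key2 : (n : ℝ) * (α : ℝ) ≤ (n : ℝ) * ((r % p : ℕ) : ℝ) :=
          mul_le_mul_of_nonneg_left f2 (le_of_lt fn0)
        have hd2 : (0 : ℝ) < (n : ℝ) * (r / p : ℕ) + L := by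
          have h5 : (0 : ℝ) ≤ (n : ℝ) * (r / p : ℕ) := by positivity
          have h6 : (1 : ℝ) ≤ (L : ℝ) := by exact_mod_cast hL1
          linarith
        have fRn : (n : ℝ) * ((p : ℝ) * (r / p : ℕ)) + (n : ℝ) * ((r % p : ℕ) : ℝ)
            = (n : ℝ) * r := by rw [← mul_add, fR]
        rw [le_div_iff₀ hd2]
        nlinarith [fRn, key2, f4]
  · -- backward direction
    intro p hp hsq ⟨l, A, hl1, hl2, hlg, hdvd, hineq1, hineq2⟩
    haveI := Fact.mk hp
    haveI : NeZero p := ⟨hp.pos.ne'⟩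
    have hppos : 0 < p := hp.pos
    have hp2' : n * r + m < p ^ 2 := by
      have h1 : ((n : ℝ) * r + m) < (p : ℝ) ^ 2 :=
        (Real.sqrt_lt' (by exact_mod_cast hppos)).mp hsq
      have h2 : ((n * r + m : ℕ) : ℝ) < ((p ^ 2 : ℕ) : ℝ) := by push_cast; linarith
      exact_mod_cast h2
    have hp2 : n * r < p ^ 2 := by omega
    have hl2' : 2 * l < n := by
      have h1 : ((2 * l : ℕ) : ℝ) < ((n : ℕ) : ℝ) := by
        push_cast
        linarith
      exact_mod_cast h1
    -- real to ℕ inequalities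
    have fn0 : (0 : ℝ) < n := by exact_mod_cast hn0
    have hd1 : (0 : ℝ) < (n : ℝ) * A + n - l := by
      have h5 : (0 : ℝ) ≤ (n : ℝ) * A := by positivity
      have h6 : ((l : ℕ) : ℝ) < (n : ℝ) := by
        have : l < n := by omega
        exact_mod_cast this
      linarith
    have hd2 : (0 : ℝ) < (n : ℝ) * A + l := by
      have h5 : (0 : ℝ) ≤ (n : ℝ) * A := by positivity
      have h6 : (1 : ℝ) ≤ (l : ℝ) := by exact_mod_cast hl1
      linarith
    have e1 : n * r + m + n + l * p ≤ n * A * p + n * p := by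
      have h2 := (div_le_iff₀ hd1).mp hineq1
      have h1 : ((n * r + m + n + l * p : ℕ) : ℝ) ≤ ((n * A * p + n * p : ℕ) : ℝ) := by
        push_cast
        nlinarith [h2]
      exact_mod_cast h1
    have e2 : n * A * p + l * p + m ≤ n * r := by
      have h2 := (le_div_iff₀ hd2).mp hineq2
      have h1 : ((n * A * p + l * p + m : ℕ) : ℝ) ≤ ((n * r : ℕ) : ℝ) := by
        push_cast
        nlinarith [h2]
      exact_mod_cast h1
    obtain ⟨α, hα⟩ := hdvd
    have hα1 : 1 ≤ α := by
      rcases Nat.eq_zero_or_pos α with h0' | h0'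
      · exfalso
        rw [h0', Nat.mul_zero] at hα
        obtain ⟨hx1, hx2⟩ := Nat.add_eq_zero.mp hα
        omega
      · exact h0'
    have hAα : A * p + α ≤ r := by
      apply Nat.le_of_mul_le_mul_left _ hn0
      have hexp : n * (A * p + α) = n * A * p + n * α := by ring
      rw [hexp]
      have hexp2 : n * α = l * p + m := hα.symm
      linarith [e2]
    have hrA : r + 1 + α ≤ A * p + p := by
      apply Nat.le_of_mul_le_mul_left _ hn0
      have hexp : n * (A * p + p) = n * A * p + n * p := by ring
      rw [Nat.mul_add, Nat.mul_add, hexp]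
      have hexp2 : n * α = l * p + m := hα.symm
      linarith [e1]
    obtain ⟨T, hT⟩ : ∃ T, A * p = T := ⟨_, rfl⟩
    rw [hT] at hAα hrA
    have h2α : 2 * α < p := by omega
    have hαp : α < p := by omega
    set R0 := r - T with hR0
    have hxx : r = p * A + R0 := by
      rw [Nat.mul_comm p A, hT]
      omega
    have hdm := div_mod_eq hppos (show R0 < p by omega) hxx
    have hαR : α ≤ r % p := by rw [hdm.2]; omega
    have hRα : r % p + α < p := by rw [hdm.2]; omega
    have hpn : ¬ p ∣ n := by
      intro hpn'
      have hpnα : p ∣ n * α := hpn'.mul_right α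
      have hm' : m = n * α - l * p := by
        rw [← hα, Nat.add_sub_cancel_left]
      have hpm' : p ∣ m := by
        rw [hm']
        exact Nat.dvd_sub hpnα (dvd_mul_left p l)
      have h4 := Nat.dvd_gcd hpm' hpn'
      rw [hg] at h4
      exact hp.one_lt.ne' (Nat.dvd_one.mp h4)
    have hmα : m ≤ n * α := by
      have h5 : m ≤ l * p + m := Nat.le_add_left m _
      rwa [hα] at h5
    have hdvdα : p ∣ n * α - m := by
      have h5 : n * α - m = l * p := by
        rw [← hα, Nat.add_sub_cancel]
      rw [h5]
      exact dvd_mul_left p l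
    set β := p - α with hβdef
    have hβ1 : 1 ≤ β := by omega
    have hab : α + β = p := by omega
    have hsum : n * β + n * α = n * p := by
      rw [← Nat.mul_add]
      congr 1
      omega
    have hdvdβ : p ∣ n * β + m := by
      have key : ∀ X Y Z W : ℕ, Y + X = Z → W + m = X → Y + m = Z - W := by
        intros; omega
      rw [key (n * α) (n * β) (n * p) (l * p) hsum hα]
      exact Nat.dvd_sub (dvd_mul_left p n) (dvd_mul_left p l)
    have hαr : α ≤ r := le_trans hαR (Nat.mod_le r p)
    have hceq := central_eq hppos hα1 hβ1 hab hαR hRα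
    have hvden := vden_eq hp hm hmn hαr hpn hp2 hα1 (le_of_lt hαp) hmα hdvdα
    have hvnum := vnum_eq hp hm hn0 hr hαr hpn hp2' hβ1 (by omega) hdvdβ
    have hchne : r.choose α * Nnum m n r α ≠ 0 := by
      have hx1 : 0 < r.choose α := Nat.choose_pos hαr
      have hx2 : 0 < Nnum m n r α := Finset.prod_pos (fun i hi => by omega)
      exact Nat.mul_ne_zero hx1.ne' hx2.ne'
    have hMpos : 0 < Mden m n α := by
      apply Finset.prod_pos
      intro i hi
      have hi1 := (Finset.mem_Icc.mp hi).1
      have h2 : n ≤ i * n := Nat.le_mul_of_pos_left n (by omega)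
      omega
    have hfinal : padicValNat p (r.choose α * Nnum m n r α) + 1
        ≤ padicValNat p (Mden m n α) := by
      rw [hvden, hceq, ← hvnum]
    apply (pow_dvd_hyperD_iff hp le_rfl).mpr ⟨α, hαr, ?_⟩ |> (by simpa using ·)
    rw [coeff_hyperY hmn hαr]
    exact (pow_dvd_den_iff hp le_rfl hchne hMpos.ne').mpr hfinal
end

section
/- Let m = 1, let n ∈ {3, 4, 6}, and let r be a positive integer. If a prime p divides D_{m,n,r}, then p ≡ n − 1 (mod n) and v_p(D_{m,n,r}) ≤ ⌊log(nr)/(2·log p) + 1/2⌋. -/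
lemma div_cases2' {q x : ℕ} (hx : x < 2 * q) :
    (x / q = 1 ∧ q ≤ x) ∨ (x / q = 0 ∧ x < q) := by
  rcases le_or_gt q x with h | h
  · left; exact ⟨Nat.div_eq_of_lt_le (by omega) (by omega), h⟩
  · right; exact ⟨Nat.div_eq_of_lt h, h⟩

lemma div_cases3' {q x : ℕ} (hx : x < 3 * q) :
    (x / q = 2 ∧ 2 * q ≤ x) ∨ (x / q = 1 ∧ q ≤ x ∧ x < 2 * q) ∨ (x / q = 0 ∧ x < q) := by
  rcases le_or_gt (2 * q) x with h | h
  · left; exact ⟨Nat.div_eq_of_lt_le (by omega) (by omega), h⟩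
  rcases le_or_gt q x with h' | h'
  · right; left; exact ⟨Nat.div_eq_of_lt_le (by omega) (by omega), h', h⟩
  · right; right; exact ⟨Nat.div_eq_of_lt h', h'⟩

lemma core_ineq_s12 {q u h r : ℕ} (hq : 2 ≤ q) (hu1 : 1 ≤ u) (huq : u < q) (hhr : h ≤ r) :
    (h + (q - u)) / q ≤ ((r + u) / q - (r - h + u) / q)
      + (if q ≤ h % q + (r - h) % q then 1 else 0)
      + (if 2 * u < q ∧ u ≤ r then 1 else 0) := by
  have hq0 : 0 < q := by omega
  set a := h / q with ha
  set b := h % q with hb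
  set c := (r - h) / q with hc
  set d := (r - h) % q with hd
  have hA : q * a + b = h := Nat.div_add_mod h q
  have hC : q * c + d = r - h := Nat.div_add_mod (r - h) q
  have hbq : b < q := Nat.mod_lt _ hq0
  have hdq : d < q := Nat.mod_lt _ hq0
  have E1 : (h + (q - u)) / q = (b + (q - u)) / q + a := by
    rw [show h + (q - u) = (b + (q - u)) + q * a by omega, Nat.add_mul_div_left _ _ hq0]
  have E2 : (r - h + u) / q = (d + u) / q + c := by
    rw [show r - h + u = (d + u) + q * c by omega, Nat.add_mul_div_left _ _ hq0]
  have E3 : (r + u) / q = (b + d + u) / q + a + c := by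
    rw [show r + u = ((b + d + u) + q * a) + q * c by omega, Nat.add_mul_div_left _ _ hq0,
      Nat.add_mul_div_left _ _ hq0]
  have D1 := div_cases2' (q := q) (x := b + (q - u)) (by omega)
  have D2 := div_cases2' (q := q) (x := d + u) (by omega)
  have D3 := div_cases3' (q := q) (x := b + d + u) (by omega)
  have hbh : b ≤ h := Nat.mod_le _ _
  rw [E1, E2, E3]
  split_ifs <;> omega

lemma count_dvd_Ioc (q L M : ℕ) (hLM : L ≤ M) :
    ((Finset.Ioc L M).filter (fun i => q ∣ i)).card = M / q - L / q := by
  have hsplit : Finset.Ioc 0 L ∪ Finset.Ioc L M = Finset.Ioc 0 M :=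
    Finset.Ioc_union_Ioc_eq_Ioc (Nat.zero_le L) hLM
  have hdisj : Disjoint (Finset.Ioc 0 L) (Finset.Ioc L M) := by
    simp [Finset.disjoint_left, Finset.mem_Ioc]
    omega
  have := Nat.Ioc_filter_dvd_card_eq_div M q
  have hL := Nat.Ioc_filter_dvd_card_eq_div L q
  rw [← hsplit, Finset.filter_union, Finset.card_union_of_disjoint
    (hdisj.mono (Finset.filter_subset _ _) (Finset.filter_subset _ _))] at this
  omega

lemma count_cong_Ioc (q c L M : ℕ) (hLM : L ≤ M) :
    ((Finset.Ioc L M).filter (fun i => q ∣ i + c)).card = (M + c) / q - (L + c) / q := by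
  have : ((Finset.Ioc L M).filter (fun i => q ∣ i + c)).card
      = ((Finset.Ioc (L + c) (M + c)).filter (fun i => q ∣ i)).card := by
    apply Finset.card_bij' (fun i _ => i + c) (fun j _ => j - c)
    · intro a ha
      simp only [Finset.mem_filter, Finset.mem_Ioc] at ha ⊢
      omega
    · intro a ha
      simp only [Finset.mem_filter, Finset.mem_Ioc] at ha ⊢
      constructor
      · omega
      · have : a - c + c = a := by omega
        rw [this] at *
        exact ha.2
    · intro a ha; omega
    · intro a ha
      simp only [Finset.mem_filter, Finset.mem_Ioc] at ha
      omega
  rw [this, count_dvd_Ioc q _ _ (by omega)]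

lemma res_w {n q u : ℕ} (hn : n = 3 ∨ n = 4 ∨ n = 6) (hq : 2 ≤ q) (hu1 : 1 ≤ u)
    (hdvd : q ∣ n * u - 1) (h2u : 2 * u < q) : q + 1 = n * u := by
  obtain ⟨w, hw⟩ := hdvd
  have hcase : w = 0 ∨ w = 1 ∨ w = 2 ∨ 3 ≤ w := by omega
  rcases hcase with rfl | rfl | rfl | hw3
  · rcases hn with rfl | rfl | rfl <;> omega
  · rcases hn with rfl | rfl | rfl <;> omega
  · rcases hn with rfl | rfl | rfl <;> omega
  · have h3 : q * 3 ≤ q * w := Nat.mul_le_mul_left q hw3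
    rcases hn with rfl | rfl | rfl <;> omega

lemma bad_res {d v n e : ℕ} (hd : 2 ≤ d) (hdv : d ∣ v) (hdn : d ∣ n) (he : 1 ≤ e)
    (hn : 2 ≤ n) : v ^ e % n ≠ n - 1 := by
  intro h
  have h1 : d ∣ v ^ e := dvd_pow hdv (by omega)
  have h2 : d ∣ v ^ e % n := (Nat.dvd_mod_iff hdn).2 h1
  rw [h] at h2
  have h3 : d ∣ n - (n - 1) := Nat.dvd_sub hdn h2
  have h4 : n - (n - 1) = 1 := by omega
  rw [h4] at h3
  have := Nat.le_of_dvd one_pos h3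
  omega

lemma pow_residue {n p e : ℕ} (hn : n = 3 ∨ n = 4 ∨ n = 6) (he : 1 ≤ e)
    (h : p ^ e % n = n - 1) : p % n = n - 1 ∧ Odd e := by
  have hv : (p % n) ^ e % n = n - 1 := by rw [← Nat.pow_mod]; exact h
  have hveq : p % n = n - 1 := by
    set v := p % n with hvdef
    clear_value v
    rcases hn with rfl | rfl | rfl
    · have hvlt : v < 3 := by omega
      interval_cases v
      · exact absurd hv (bad_res (d := 3) (by norm_num) (by norm_num) (by norm_num) he
          (by norm_num))
      · simp at hv
      · rfl
    · have hvlt : v < 4 := by omega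
      interval_cases v
      · exact absurd hv (bad_res (d := 2) (by norm_num) (by norm_num) (by norm_num) he
          (by norm_num))
      · simp at hv
      · exact absurd hv (bad_res (d := 2) (by norm_num) (by norm_num) (by norm_num) he
          (by norm_num))
      · rfl
    · have hvlt : v < 6 := by omega
      interval_cases v
      · exact absurd hv (bad_res (d := 2) (by norm_num) (by norm_num) (by norm_num) he
          (by norm_num))
      · simp at hv
      · exact absurd hv (bad_res (d := 2) (by norm_num) (by norm_num) (by norm_num) he
          (by norm_num))
      · exact absurd hv (bad_res (d := 3) (by norm_num) (by norm_num) (by norm_num) he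
          (by norm_num))
      · exact absurd hv (bad_res (d := 2) (by norm_num) (by norm_num) (by norm_num) he
          (by norm_num))
      · rfl
  refine ⟨hveq, ?_⟩
  rw [Nat.odd_iff]
  by_contra hodd
  obtain ⟨f, hf⟩ : ∃ f, e = 2 * f := ⟨e / 2, by omega⟩
  rw [hveq, hf, pow_mul, Nat.pow_mod] at hv
  have hsq : ((n : ℕ) - 1) ^ 2 % n = 1 := by
    rcases hn with rfl | rfl | rfl <;> norm_num
  rw [hsq, one_pow] at hv
  rw [Nat.mod_eq_of_lt (show (1:ℕ) < n by rcases hn with rfl|rfl|rfl <;> norm_num)] at hv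
  rcases hn with rfl | rfl | rfl <;> omega

/-- The per-level counting bound. -/
lemma level_bound {n r p e h : ℕ} (hn : n = 3 ∨ n = 4 ∨ n = 6) (hp : p.Prime)
    (he : 1 ≤ e) (hhr : h ≤ r) :
    ((Finset.Icc 1 h).filter (fun i => p ^ e ∣ i * n - 1)).card ≤
      ((Finset.Icc (r - h + 1) r).filter (fun i => p ^ e ∣ i * n + 1)).card
      + (if p ^ e ≤ h % p ^ e + (r - h) % p ^ e then 1 else 0)
      + (if p % n = n - 1 ∧ Odd e ∧ p ^ e < n * r then 1 else 0) := by
  have hn3 : 3 ≤ n := by rcases hn with rfl | rfl | rfl <;> norm_num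
  by_cases hpn : p ∣ n
  · have hB : ((Finset.Icc 1 h).filter (fun i => p ^ e ∣ i * n - 1)).card = 0 := by
      rw [Finset.card_eq_zero, Finset.filter_eq_empty_iff]
      intro i hi hdvd
      have hi1 : 1 ≤ i := (Finset.mem_Icc.mp hi).1
      have h1 : p ∣ i * n - 1 := dvd_trans (dvd_pow_self p (by omega)) hdvd
      have h2 : p ∣ i * n := Dvd.dvd.mul_left hpn i
      have h3 : p ∣ i * n - (i * n - 1) := Nat.dvd_sub h2 h1
      have hin : 1 ≤ i * n := by
        have := Nat.mul_le_mul hi1 hn3; omega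
      have h4 : i * n - (i * n - 1) = 1 := by omega
      rw [h4] at h3
      have := Nat.le_of_dvd one_pos h3
      have := hp.two_le
      omega
    rw [hB]
    exact Nat.zero_le _
  -- main case : p does not divide n
  set q := p ^ e with hqdef
  have hq2 : 2 ≤ q := by
    have := Nat.one_lt_pow (n := e) (a := p) (by omega) hp.one_lt
    omega
  have hcop : Nat.Coprime n q := ((hp.coprime_iff_not_dvd.mpr hpn).symm).pow_right e
  obtain ⟨m, -, hm⟩ := Nat.exists_mul_mod_eq_one_of_coprime hcop (by omega)
  set u := m % q with hudef
  have hu : n * u % q = 1 := by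
    rw [hudef, Nat.mul_mod, Nat.mod_mod_of_dvd _ dvd_rfl, ← Nat.mul_mod]
    exact hm
  have hu1 : 1 ≤ u := by
    rcases Nat.eq_zero_or_pos u with h0 | h0
    · rw [h0, Nat.mul_zero, Nat.zero_mod] at hu; omega
    · exact h0
  have huq : u < q := Nat.mod_lt _ (by omega)
  have hdvdu : q ∣ n * u - 1 := by
    have := Nat.div_add_mod (n * u) q
    exact ⟨n * u / q, by omega⟩
  have hqcop : Nat.Coprime q n := hcop.symm
  have hnu1 : 1 ≤ n * u := by
    have := Nat.mul_le_mul hn3 hu1; omega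
  have hnq : q ∣ n * q := dvd_mul_left q n
  -- B count
  have hBeq : ((Finset.Icc 1 h).filter (fun i => q ∣ i * n - 1)).card = (h + (q - u)) / q := by
    have h1 : Finset.Icc 1 h = Finset.Ioc 0 h := (Finset.Icc_add_one_left_eq_Ioc 0 h)
    rw [h1]
    have h2 : ((Finset.Ioc 0 h).filter (fun i => q ∣ i * n - 1)).card
        = ((Finset.Ioc 0 h).filter (fun i => q ∣ i + (q - u))).card := by
      congr 1
      apply Finset.filter_congr
      intro i hi
      have hi1 : 1 ≤ i := (Finset.mem_Ioc.mp hi).1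
      have hin : 1 ≤ i * n := by
        have := Nat.mul_le_mul hi1 hn3; omega
      have hcomm : i * n = n * i := Nat.mul_comm i n
      have hdist : n * (i + (q - u)) = n * i + n * (q - u) := Nat.mul_add n i (q - u)
      have hsub : n * (q - u) = n * q - n * u := Nat.mul_sub n q u
      have hle : n * u ≤ n * q := Nat.mul_le_mul_left n (by omega)
      constructor
      · intro hd
        have key : q ∣ n * (i + (q - u)) := by
          have hd2 : q ∣ (n * (q - u) + 1) := by
            have heq : n * (q - u) + 1 = n * q - (n * u - 1) := by omega
            rw [heq]
            exact Nat.dvd_sub hnq hdvdu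
          have : q ∣ (i * n - 1) + (n * (q - u) + 1) := Nat.dvd_add hd hd2
          have heq2 : (i * n - 1) + (n * (q - u) + 1) = n * (i + (q - u)) := by omega
          rwa [heq2] at this
        exact hqcop.dvd_of_dvd_mul_left key
      · intro hd
        have key : q ∣ n * (i + (q - u)) := Dvd.dvd.mul_left hd n
        have hd2 : q ∣ (n * (q - u) + 1) := by
          have heq : n * (q - u) + 1 = n * q - (n * u - 1) := by omega
          rw [heq]
          exact Nat.dvd_sub hnq hdvdu
        have : q ∣ n * (i + (q - u)) - (n * (q - u) + 1) := Nat.dvd_sub key hd2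
        have heq2 : n * (i + (q - u)) - (n * (q - u) + 1) = i * n - 1 := by omega
        rwa [heq2] at this
    rw [h2, count_cong_Ioc q (q - u) 0 h (Nat.zero_le h)]
    have h3 : (0 + (q - u)) / q = 0 := Nat.div_eq_of_lt (by omega)
    rw [h3, Nat.sub_zero]
  -- A count
  have hAeq : ((Finset.Icc (r - h + 1) r).filter (fun i => q ∣ i * n + 1)).card
      = (r + u) / q - (r - h + u) / q := by
    have h1 : Finset.Icc (r - h + 1) r = Finset.Ioc (r - h) r := (Finset.Icc_add_one_left_eq_Ioc (r - h) r)
    rw [h1]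
    have h2 : ((Finset.Ioc (r - h) r).filter (fun i => q ∣ i * n + 1)).card
        = ((Finset.Ioc (r - h) r).filter (fun i => q ∣ i + u)).card := by
      congr 1
      apply Finset.filter_congr
      intro i _
      have hcomm : i * n = n * i := Nat.mul_comm i n
      have hdist : n * (i + u) = n * i + n * u := Nat.mul_add n i u
      constructor
      · intro hd
        have key : q ∣ n * (i + u) := by
          have : q ∣ (i * n + 1) + (n * u - 1) := Nat.dvd_add hd hdvdu
          have heq2 : (i * n + 1) + (n * u - 1) = n * (i + u) := by omega
          rwa [heq2] at this
        exact hqcop.dvd_of_dvd_mul_left key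
      · intro hd
        have key : q ∣ n * (i + u) := Dvd.dvd.mul_left hd n
        have : q ∣ n * (i + u) - (n * u - 1) := Nat.dvd_sub key hdvdu
        have heq2 : n * (i + u) - (n * u - 1) = i * n + 1 := by omega
        rwa [heq2] at this
    rw [h2, count_cong_Ioc q u (r - h) r (by omega)]
  rw [hBeq, hAeq]
  have hcore := core_ineq_s12 (q := q) (u := u) (h := h) (r := r) hq2 hu1 huq hhr
  by_cases hc2 : 2 * u < q ∧ u ≤ r
  · have hcf : p % n = n - 1 ∧ Odd e ∧ q < n * r := by
      have hqeq : q + 1 = n * u := res_w hn hq2 hu1 hdvdu hc2.1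
      have hmod : q % n = n - 1 := by
        rcases hn with rfl | rfl | rfl <;> omega
      have hres := pow_residue hn he hmod
      refine ⟨hres.1, hres.2, ?_⟩
      have : n * u ≤ n * r := Nat.mul_le_mul_left n hc2.2
      rcases hn with rfl | rfl | rfl <;> omega
    rw [if_pos hc2] at hcore
    rw [if_pos hcf]
    omega
  · rw [if_neg hc2] at hcore
    have : (0:ℕ) ≤ if p % n = n - 1 ∧ Odd e ∧ q < n * r then 1 else 0 := Nat.zero_le _
    omega

/-- `padicValNat` as a count of prime-power divisors over a fixed range. -/
lemma val_as_count {p x b : ℕ} (hp : p.Prime) (hx : x ≠ 0) (hxb : x ≤ p ^ b) :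
    padicValNat p x = ∑ e ∈ Finset.Ico 1 (b + 1), if p ^ e ∣ x then 1 else 0 := by
  rw [← Nat.factorization_def x hp, Nat.factorization_eq_card_pow_dvd x hp,
    Nat.Ico_filter_pow_dvd_eq hp hx hxb, ← Finset.Ico_add_one_right_eq_Icc, Finset.card_filter]

/-- **Main valuation bound**: the `p`-adic valuation of the "denominator product"
is bounded by the valuation of the numerator data plus the count of exceptional levels. -/
lemma valuation_bound {n r p h : ℕ} (hn : n = 3 ∨ n = 4 ∨ n = 6) (hp : p.Prime)
    (hr : 0 < r) (hhr : h ≤ r) :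
    padicValNat p (∏ i ∈ Finset.Icc 1 h, (i * n - 1)) ≤
      padicValNat p (r.choose h)
      + padicValNat p (∏ i ∈ Finset.Icc (r - h + 1) r, (i * n + 1))
      + ((Finset.Ico 1 (n * r + 1)).filter
          (fun e => p % n = n - 1 ∧ Odd e ∧ p ^ e < n * r)).card := by
  haveI : Fact p.Prime := ⟨hp⟩
  have hn3 : 3 ≤ n := by rcases hn with rfl | rfl | rfl <;> norm_num
  set E := n * r with hE
  have hE3 : 3 ≤ E := by
    have : 3 * 1 ≤ n * r := Nat.mul_le_mul hn3 hr
    omega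
  have hpE : ∀ x : ℕ, x ≤ E + 1 → x ≤ p ^ E := by
    intro x hx
    calc x ≤ E + 1 := hx
      _ ≤ 2 ^ E := by
          have := Nat.lt_two_pow_self (n := E)
          have h2 : E + 1 ≤ 2 ^ E := this
          exact h2
      _ ≤ p ^ E := Nat.pow_le_pow_left hp.two_le E
  -- facts about the factors
  have hBfac : ∀ i ∈ Finset.Icc 1 h, i * n - 1 ≠ 0 := by
    intro i hi
    have hi1 : 1 ≤ i := (Finset.mem_Icc.mp hi).1
    have := Nat.mul_le_mul hi1 hn3
    omega
  have hAfac : ∀ i ∈ Finset.Icc (r - h + 1) r, i * n + 1 ≠ 0 := by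
    intro i _; omega
  -- expand the valuation of the B product as a double sum
  have hBsum : padicValNat p (∏ i ∈ Finset.Icc 1 h, (i * n - 1))
      = ∑ e ∈ Finset.Ico 1 (E + 1),
          ((Finset.Icc 1 h).filter (fun i => p ^ e ∣ i * n - 1)).card := by
    rw [← Nat.factorization_def _ hp, Nat.factorization_prod hBfac, Finset.sum_apply']
    have : ∀ i ∈ Finset.Icc 1 h,
        (Nat.factorization (i * n - 1)) p
          = ∑ e ∈ Finset.Ico 1 (E + 1), if p ^ e ∣ i * n - 1 then 1 else 0 := by
      intro i hi
      have hi1 : 1 ≤ i := (Finset.mem_Icc.mp hi).1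
      have hih : i ≤ h := (Finset.mem_Icc.mp hi).2
      rw [Nat.factorization_def _ hp]
      apply val_as_count hp (hBfac i hi)
      apply hpE
      have : i * n ≤ r * n := Nat.mul_le_mul (le_trans hih hhr) le_rfl
      have : i * n ≤ n * r := by rw [Nat.mul_comm n r]; exact this
      omega
    rw [Finset.sum_congr rfl this, Finset.sum_comm]
    apply Finset.sum_congr rfl
    intro e _
    rw [Finset.card_filter]
  have hAsum : padicValNat p (∏ i ∈ Finset.Icc (r - h + 1) r, (i * n + 1))
      = ∑ e ∈ Finset.Ico 1 (E + 1),
          ((Finset.Icc (r - h + 1) r).filter (fun i => p ^ e ∣ i * n + 1)).card := by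
    rw [← Nat.factorization_def _ hp, Nat.factorization_prod hAfac, Finset.sum_apply']
    have : ∀ i ∈ Finset.Icc (r - h + 1) r,
        (Nat.factorization (i * n + 1)) p
          = ∑ e ∈ Finset.Ico 1 (E + 1), if p ^ e ∣ i * n + 1 then 1 else 0 := by
      intro i hi
      have hir : i ≤ r := (Finset.mem_Icc.mp hi).2
      rw [Nat.factorization_def _ hp]
      apply val_as_count hp (hAfac i hi)
      apply hpE
      have : i * n ≤ r * n := Nat.mul_le_mul hir le_rfl
      have : i * n ≤ n * r := by rw [Nat.mul_comm n r]; exact this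
      omega
    rw [Finset.sum_congr rfl this, Finset.sum_comm]
    apply Finset.sum_congr rfl
    intro e _
    rw [Finset.card_filter]
  have hCsum : padicValNat p (r.choose h)
      = ∑ e ∈ Finset.Ico 1 (E + 1),
          if p ^ e ≤ h % p ^ e + (r - h) % p ^ e then 1 else 0 := by
    rw [padicValNat_choose hhr (show Nat.log p r < E + 1 by
      have := Nat.log_le_self p r
      have : r ≤ E := by
        calc r = 1 * r := (Nat.one_mul r).symm
          _ ≤ n * r := Nat.mul_le_mul (by omega) le_rfl
      omega), Finset.card_filter]
  have hKsum : ((Finset.Ico 1 (E + 1)).filter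
        (fun e => p % n = n - 1 ∧ Odd e ∧ p ^ e < n * r)).card
      = ∑ e ∈ Finset.Ico 1 (E + 1),
          if p % n = n - 1 ∧ Odd e ∧ p ^ e < n * r then 1 else 0 :=
    Finset.card_filter _ _
  rw [hBsum, hAsum, hCsum, hKsum, ← Finset.sum_add_distrib, ← Finset.sum_add_distrib]
  apply Finset.sum_le_sum
  intro e he
  have he1 : 1 ≤ e := (Finset.mem_Ico.mp he).1
  have := level_bound (h := h) hn hp he1 hhr
  omega


lemma hyperY_coeff (m n r h : ℕ) :
    (hyperY m n r).coeff h = if h ≤ r then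
      (r.choose h : ℚ) *
        (∏ i ∈ Finset.Icc (r - h + 1) r, ((i : ℚ) * n + m)) /
        (∏ i ∈ Finset.Icc 1 h, ((i : ℚ) * n - m)) else 0 := by
  unfold hyperY
  rw [Polynomial.finset_sum_coeff]
  have : ∀ j ∈ Finset.range (r + 1),
      (Polynomial.C ((r.choose j : ℚ) *
        (∏ i ∈ Finset.Icc (r - j + 1) r, ((i : ℚ) * n + m)) /
        (∏ i ∈ Finset.Icc 1 j, ((i : ℚ) * n - m))) * Polynomial.X ^ j).coeff h
      = if j = h then ((r.choose j : ℚ) *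
        (∏ i ∈ Finset.Icc (r - j + 1) r, ((i : ℚ) * n + m)) /
        (∏ i ∈ Finset.Icc 1 j, ((i : ℚ) * n - m))) else 0 := by
    intro j _
    rw [Polynomial.coeff_C_mul, Polynomial.coeff_X_pow]
    split_ifs with h1 h2 h3
    · rw [mul_one]
    · exact absurd h1.symm h2
    · exact absurd h3.symm h1
    · rw [mul_zero]
  rw [Finset.sum_congr rfl this, Finset.sum_ite_eq']
  simp [Nat.lt_succ_iff]

/-- Cast of the coefficient to a quotient of naturals, for `m = 1` and `h ≤ r`. -/
lemma hyperY_coeff_cast (n r h : ℕ) (hn : 3 ≤ n) (hhr : h ≤ r) :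
    (hyperY 1 n r).coeff h =
      ((r.choose h * ∏ i ∈ Finset.Icc (r - h + 1) r, (i * n + 1) : ℕ) : ℚ) /
      ((∏ i ∈ Finset.Icc 1 h, (i * n - 1) : ℕ) : ℚ) := by
  rw [hyperY_coeff, if_pos hhr]
  have hA : (∏ i ∈ Finset.Icc (r - h + 1) r, ((i : ℚ) * n + 1))
      = ((∏ i ∈ Finset.Icc (r - h + 1) r, (i * n + 1) : ℕ) : ℚ) := by
    rw [Nat.cast_prod]
    apply Finset.prod_congr rfl
    intro i _
    push_cast
    ring
  have hB : (∏ i ∈ Finset.Icc 1 h, ((i : ℚ) * n - 1))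
      = ((∏ i ∈ Finset.Icc 1 h, (i * n - 1) : ℕ) : ℚ) := by
    rw [Nat.cast_prod]
    apply Finset.prod_congr rfl
    intro i hi
    have hi1 : 1 ≤ i := (Finset.mem_Icc.mp hi).1
    have hin : 1 ≤ i * n := by
      have := Nat.mul_le_mul hi1 hn; omega
    rw [Nat.cast_sub hin]
    push_cast
    ring
  push_cast at hA hB ⊢
  rw [hA, hB]



/-- `(D * x).den = 1 ↔ x.den ∣ D` for positive natural `D`. -/
lemma mul_den_one {D : ℕ} (hD : 0 < D) (x : ℚ) : ((D : ℚ) * x).den = 1 ↔ x.den ∣ D := by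
  constructor
  · intro h1
    have hz : ((D : ℚ) * x) = (((D : ℚ) * x).num : ℚ) := by
      conv_lhs => rw [← Rat.num_div_den ((D : ℚ) * x)]
      rw [h1]
      norm_num
    have hDne : (D : ℚ) ≠ 0 := by positivity
    have hxq : x = ((((D : ℚ) * x).num : ℚ)) / (D : ℚ) := by
      rw [eq_div_iff hDne]
      rw [← hz]; ring
    have hdi : x = Rat.divInt ((D : ℚ) * x).num (D : ℤ) := by
      rw [Rat.divInt_eq_div]
      push_cast
      exact hxq
    have := Rat.den_dvd ((D : ℚ) * x).num (D : ℤ)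
    rw [← hdi] at this
    exact_mod_cast this
  · intro hdvd
    obtain ⟨t, ht⟩ := hdvd
    have hkey : (D : ℚ) * x = ((t * x.num : ℤ) : ℚ) := by
      push_cast
      rw [ht]
      push_cast
      calc ((x.den : ℚ) * t) * x = t * (x * x.den) := by ring
        _ = t * x.num := by rw [Rat.mul_den_eq_num]
    rw [hkey, Rat.den_intCast]

/-- If all coefficient denominators have `p`-valuation at most `K`, then
`p^(K+1)` does not divide `hyperD`. -/
lemma hyperD_not_dvd {n r p K : ℕ} (hp : p.Prime)
    (hden : ∀ h : ℕ, padicValNat p ((hyperY 1 n r).coeff h).den ≤ K)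
    (hden1 : ∀ h : ℕ, r < h → ((hyperY 1 n r).coeff h).den = 1) :
    ¬ p ^ (K + 1) ∣ hyperD 1 n r := by
  haveI : Fact p.Prime := ⟨hp⟩
  set S : Set ℕ := {D : ℕ | 0 < D ∧ ∀ h : ℕ, ((D : ℚ) * (hyperY 1 n r).coeff h).den = 1}
    with hS
  have hDdef : hyperD 1 n r = sInf S := rfl
  -- S is nonempty
  set D0 : ℕ := ∏ h ∈ Finset.range (r + 1), ((hyperY 1 n r).coeff h).den with hD0
  have hD0pos : 0 < D0 := Finset.prod_pos fun h _ => Rat.den_pos _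
  have hD0S : D0 ∈ S := by
    refine ⟨hD0pos, fun h => ?_⟩
    rw [mul_den_one hD0pos]
    rcases le_or_gt h r with hh | hh
    · exact Finset.dvd_prod_of_mem _ (Finset.mem_range.mpr (by omega))
    · rw [hden1 h hh]
      exact one_dvd _
  have hne : S.Nonempty := ⟨D0, hD0S⟩
  have hmem : sInf S ∈ S := Nat.sInf_mem hne
  have hpos : 0 < sInf S := hmem.1
  intro hKdvd
  rw [hDdef] at hKdvd
  obtain ⟨M, hM⟩ := hKdvd
  have hMpos : 0 < M := by
    rcases Nat.eq_zero_or_pos M with h0 | h0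
    · rw [h0, Nat.mul_zero] at hM; omega
    · exact h0
  set D' : ℕ := p ^ K * M with hD'
  have hD'pos : 0 < D' := Nat.mul_pos (Nat.pow_pos (n := K) hp.pos) hMpos
  have hD'lt : D' < sInf S := by
    rw [hM]
    exact (Nat.mul_lt_mul_right hMpos).mpr (Nat.pow_lt_pow_right hp.one_lt (by omega))
  have hD'S : D' ∈ S := by
    refine ⟨hD'pos, fun h => ?_⟩
    rw [mul_den_one hD'pos]
    set d : ℕ := ((hyperY 1 n r).coeff h).den with hd
    have hdpos : 0 < d := Rat.den_pos _
    have hddvd : d ∣ sInf S := by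
      have := hmem.2 h
      rwa [mul_den_one hpos] at this
    set v : ℕ := d.factorization p with hv
    have hvK : v ≤ K := by
      have : v = padicValNat p d := Nat.factorization_def d hp
      rw [this]
      exact hden h
    set d0 : ℕ := d / p ^ v with hd0
    have hsplit : p ^ v * d0 = d := Nat.ordProj_mul_ordCompl_eq_self d p
    have hnd : ¬ p ∣ d0 := Nat.not_dvd_ordCompl hp (by omega)
    have hd0dvd : d0 ∣ sInf S := dvd_trans (Nat.ordCompl_dvd d p) hddvd
    have hcop : Nat.Coprime d0 (p ^ (K + 1)) :=
      ((hp.coprime_iff_not_dvd.mpr hnd).symm).pow_right (K + 1)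
    have hd0M : d0 ∣ M := by
      apply hcop.dvd_of_dvd_mul_left
      rw [← hM]
      exact hd0dvd
    calc d = p ^ v * d0 := hsplit.symm
      _ ∣ p ^ K * M := mul_dvd_mul (pow_dvd_pow p hvK) hd0M
  have := Nat.sInf_le hD'S
  omega

/-- A finset of odd numbers bounded by an odd `M` has at most `(M+1)/2` elements. -/
lemma card_odd_le {s : Finset ℕ} {M : ℕ} (hM : ∀ e ∈ s, Odd e ∧ e ≤ M) (hModd : Odd M) :
    2 * s.card ≤ M + 1 := by
  have h1 : s.card ≤ (Finset.range ((M + 1) / 2)).card := by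
    apply Finset.card_le_card_of_injOn (fun e => e / 2)
    · intro e he
      obtain ⟨hodd, hle⟩ := hM e he
      have h1 : e % 2 = 1 := Nat.odd_iff.mp hodd
      have h2 : M % 2 = 1 := Nat.odd_iff.mp hModd
      simp only [Finset.mem_coe, Finset.mem_range]
      omega
    · intro e he e' he' heq
      have h1 : e % 2 = 1 := Nat.odd_iff.mp (hM e he).1
      have h2 : e' % 2 = 1 := Nat.odd_iff.mp (hM e' he').1
      simp only at heq
      omega
  rw [Finset.card_range] at h1
  have h2 : M % 2 = 1 := Nat.odd_iff.mp hModd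
  omega

/-- Valuation bound for the denominators of the coefficients of `hyperY 1 n r`. -/
lemma den_coeff_bound {n r p : ℕ} (hn : n = 3 ∨ n = 4 ∨ n = 6) (hp : p.Prime)
    (hr : 0 < r) (h : ℕ) :
    padicValNat p ((hyperY 1 n r).coeff h).den ≤
      ((Finset.Ico 1 (n * r + 1)).filter
        (fun e => p % n = n - 1 ∧ Odd e ∧ p ^ e < n * r)).card := by
  haveI : Fact p.Prime := ⟨hp⟩
  have hn3 : 3 ≤ n := by rcases hn with rfl | rfl | rfl <;> norm_num
  set K := ((Finset.Ico 1 (n * r + 1)).filter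
    (fun e => p % n = n - 1 ∧ Odd e ∧ p ^ e < n * r)).card with hK
  rcases le_or_gt h r with hhr | hhr
  · set x := (hyperY 1 n r).coeff h with hx
    by_cases hpd : p ∣ x.den
    · set B : ℕ := ∏ i ∈ Finset.Icc 1 h, (i * n - 1) with hB
      set N : ℕ := r.choose h * ∏ i ∈ Finset.Icc (r - h + 1) r, (i * n + 1) with hN
      have hBpos : 0 < B := by
        apply Finset.prod_pos
        intro i hi
        have hi1 : 1 ≤ i := (Finset.mem_Icc.mp hi).1
        have := Nat.mul_le_mul hi1 hn3
        omega
      have hApos : 0 < ∏ i ∈ Finset.Icc (r - h + 1) r, (i * n + 1) := by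
        apply Finset.prod_pos; intro i _; omega
      have hNpos : 0 < N := Nat.mul_pos (Nat.choose_pos hhr) hApos
      have hxeq : x = (N : ℚ) / (B : ℚ) := hyperY_coeff_cast n r h hn3 hhr
      have hnum : padicValNat p x.num.natAbs = 0 := by
        apply padicValNat.eq_zero_of_not_dvd
        intro hdn
        have hg : p ∣ Nat.gcd x.num.natAbs x.den := Nat.dvd_gcd hdn hpd
        rw [x.reduced] at hg
        have := Nat.le_of_dvd one_pos hg
        have := hp.two_le
        omega
      have hval : padicValRat p x = (padicValNat p N : ℤ) - (padicValNat p B : ℤ) := by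
        rw [hxeq, padicValRat.div (by exact_mod_cast hNpos.ne') (by exact_mod_cast hBpos.ne'),
          padicValRat.of_nat, padicValRat.of_nat]
      have hval2 : padicValRat p x
          = (padicValNat p x.num.natAbs : ℤ) - (padicValNat p x.den : ℤ) := rfl
      have hvalN : padicValNat p N
          = padicValNat p (r.choose h)
            + padicValNat p (∏ i ∈ Finset.Icc (r - h + 1) r, (i * n + 1)) := by
        rw [hN]
        exact padicValNat.mul (Nat.choose_pos hhr).ne' hApos.ne'
      have hvb := valuation_bound (h := h) hn hp hr hhr
      rw [hnum] at hval2
      have hcomb := hval2.symm.trans hval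
      simp only [Nat.cast_zero] at hcomb
      have : (padicValNat p x.den : ℤ) = (padicValNat p B : ℤ) - (padicValNat p N : ℤ) := by
        omega
      rw [hvalN] at this
      rw [Nat.cast_add] at this
      have hvbZ : (padicValNat p B : ℤ) ≤ (padicValNat p (r.choose h) : ℤ)
          + (padicValNat p (∏ i ∈ Finset.Icc (r - h + 1) r, (i * n + 1)) : ℤ)
          + (K : ℤ) := by exact_mod_cast hvb
      have hfin : (padicValNat p x.den : ℤ) ≤ (K : ℤ) := by
        linarith [this, hvbZ]
      exact_mod_cast hfin
    · rw [padicValNat.eq_zero_of_not_dvd hpd]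
      exact Nat.zero_le _
  · rw [hyperY_coeff, if_neg (by omega)]
    simp

/-- **Lemma 3(a).** For `m = 1` and `n ∈ {3, 4, 6}`: if a prime `p` divides
`D_{1,n,r}`, then `p ≡ n − 1 (mod n)` and
`v_p(D_{1,n,r}) ≤ ⌊log(nr)/(2·log p) + 1/2⌋`. -/
theorem hyperD_prime_divisors_special (n r : ℕ) (hn : n ∈ ({3, 4, 6} : Set ℕ))
    (hr : 0 < r) (p : ℕ) (hp : p.Prime) (hdvd : p ∣ hyperD 1 n r) :
    p % n = n - 1 ∧
    (padicValNat p (hyperD 1 n r) : ℤ) ≤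
      ⌊Real.log ((n : ℝ) * r) / (2 * Real.log (p : ℝ)) + 1 / 2⌋ := by
  haveI : Fact p.Prime := ⟨hp⟩
  have hn' : n = 3 ∨ n = 4 ∨ n = 6 := by
    simpa using hn
  have hn3 : 3 ≤ n := by rcases hn' with rfl | rfl | rfl <;> norm_num
  set K := ((Finset.Ico 1 (n * r + 1)).filter
    (fun e => p % n = n - 1 ∧ Odd e ∧ p ^ e < n * r)).card with hK
  have hden : ∀ h : ℕ, padicValNat p ((hyperY 1 n r).coeff h).den ≤ K :=
    fun h => den_coeff_bound hn' hp hr h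
  have hden1 : ∀ h : ℕ, r < h → ((hyperY 1 n r).coeff h).den = 1 := by
    intro h hh
    rw [hyperY_coeff, if_neg (by omega)]
    norm_num
  have hnotdvd : ¬ p ^ (K + 1) ∣ hyperD 1 n r := hyperD_not_dvd hp hden hden1
  -- first part
  have hmod : p % n = n - 1 := by
    by_contra hne
    have hK0 : K = 0 := by
      rw [hK, Finset.card_eq_zero, Finset.filter_eq_empty_iff]
      intro e _ hc
      exact hne hc.1
    rw [hK0, pow_one] at hnotdvd
    exact hnotdvd hdvd
  refine ⟨hmod, ?_⟩
  -- valuation bound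
  have hvK : padicValNat p (hyperD 1 n r) ≤ K := by
    by_contra hgt
    apply hnotdvd
    exact dvd_trans (pow_dvd_pow p (by omega)) pow_padicValNat_dvd
  set kodd := ((Finset.Ico 1 (n * r + 1)).filter
    (fun e => Odd e ∧ p ^ e < n * r)).card with hkodd
  have hKk : K ≤ kodd := by
    apply Finset.card_le_card
    intro e he
    rw [Finset.mem_filter] at he ⊢
    exact ⟨he.1, he.2.2.1, he.2.2.2⟩
  have hnr3 : 3 ≤ n * r := by
    have : 3 * 1 ≤ n * r := Nat.mul_le_mul hn3 hr
    omega
  have hlogp : 0 < Real.log p := Real.log_pos (by exact_mod_cast hp.one_lt)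
  have hlognr : 0 ≤ Real.log ((n : ℝ) * r) := by
    apply Real.log_nonneg
    have : (3 : ℝ) ≤ (n : ℝ) * r := by exact_mod_cast hnr3
    linarith
  have hreal : (kodd : ℝ) ≤ Real.log ((n : ℝ) * r) / (2 * Real.log (p : ℝ)) + 1 / 2 := by
    rcases Nat.eq_zero_or_pos kodd with h0 | h0
    · rw [h0]
      push_cast
      have hd : 0 ≤ Real.log ((n:ℝ) * r) / (2 * Real.log (p:ℝ)) :=
        div_nonneg hlognr (by linarith)
      linarith
    · have hne : (((Finset.Ico 1 (n * r + 1)).filter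
          (fun e => Odd e ∧ p ^ e < n * r))).Nonempty := by
        rw [← Finset.card_pos, ← hkodd]; exact h0
      set M := ((Finset.Ico 1 (n * r + 1)).filter
          (fun e => Odd e ∧ p ^ e < n * r)).max' hne with hM
      have hMmem := Finset.max'_mem _ hne
      rw [Finset.mem_filter] at hMmem
      have hModd : Odd M := hMmem.2.1
      have hMlt : p ^ M < n * r := hMmem.2.2
      have hM2k : 2 * kodd ≤ M + 1 := by
        rw [hkodd]
        apply card_odd_le _ hModd
        intro e he
        refine ⟨(Finset.mem_filter.mp he).2.1, Finset.le_max' _ e he⟩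
      -- real estimates
      have hplt : ((p : ℝ)) ^ M < (n : ℝ) * r := by exact_mod_cast hMlt
      have hppos : (0 : ℝ) < (p : ℝ) ^ M :=
        pow_pos (by exact_mod_cast hp.pos) M
      have hlog : (M : ℝ) * Real.log p < Real.log ((n : ℝ) * r) := by
        have := Real.log_lt_log hppos hplt
        rwa [Real.log_pow] at this
      have hMk : 2 * (kodd : ℝ) - 1 ≤ (M : ℝ) := by
        have hc : ((2 * kodd : ℕ) : ℝ) ≤ ((M + 1 : ℕ) : ℝ) := by exact_mod_cast hM2k
        push_cast at hc
        linarith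
      have h1 : (2 * (kodd : ℝ) - 1) * Real.log p ≤ (M : ℝ) * Real.log p :=
        mul_le_mul_of_nonneg_right hMk (le_of_lt hlogp)
      have h2 : (2 * (kodd : ℝ) - 1) * Real.log p < Real.log ((n : ℝ) * r) :=
        lt_of_le_of_lt h1 hlog
      have hX : (2 * (kodd : ℝ) - 1) < Real.log ((n : ℝ) * r) / Real.log p :=
        (lt_div_iff₀ hlogp).mpr h2
      have hsplit : Real.log ((n : ℝ) * r) / (2 * Real.log (p : ℝ))
          = (Real.log ((n : ℝ) * r) / Real.log (p : ℝ)) / 2 := by ring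
      rw [hsplit]
      linarith
  calc (padicValNat p (hyperD 1 n r) : ℤ) ≤ (kodd : ℤ) := by exact_mod_cast le_trans hvK hKk
    _ ≤ ⌊Real.log ((n : ℝ) * r) / (2 * Real.log (p : ℝ)) + 1 / 2⌋ := by
        rw [Int.le_floor]
        exact_mod_cast hreal
end

section
/- Let m, n, r be positive integers with gcd(m, n) = 1 and m ≤ n/2, and let z be a real number with 0 ≤ z ≤ 1. Then (1 + z)^r ≤ Y_{m,n,r}(z) ≤ (1 + z^{1/2})^{2r}. -/

private lemma pairSum (f : ℕ → ℝ) (N : ℕ) :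
    ∑ k ∈ Finset.range (2 * N), f k = ∑ h ∈ Finset.range N, (f (2 * h) + f (2 * h + 1)) := by
  induction N with
  | zero => simp
  | succ n ih =>
    rw [show 2 * (n + 1) = 2 * n + 1 + 1 by ring, Finset.sum_range_succ, Finset.sum_range_succ,
      ih, Finset.sum_range_succ]
    ring

private lemma oddIdentity (r : ℕ) : ∀ h : ℕ, h ≤ r →
    (r.choose h : ℝ) * (∏ i ∈ Finset.Icc (r - h + 1) r, (2 * (i : ℝ) + 1)) =
    ((2 * r + 1).choose (2 * h) : ℝ) * (∏ i ∈ Finset.Icc 1 h, (2 * (i : ℝ) - 1)) := by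
  intro h
  induction h with
  | zero => simp
  | succ h ih =>
    intro hhr
    have hh : h ≤ r := by omega
    have IH := ih hh
    have h1 : r - (h + 1) + 1 = r - h := by omega
    have hcast : ((r - h : ℕ) : ℝ) = (r : ℝ) - h := by
      push_cast [Nat.cast_sub hh]; ring
    have hq : (∏ i ∈ Finset.Icc 1 (h + 1), (2 * (i : ℝ) - 1)) =
        (∏ i ∈ Finset.Icc 1 h, (2 * (i : ℝ) - 1)) * (2 * ((h : ℝ) + 1) - 1) := by
      rw [Finset.prod_Icc_succ_top (by omega)]
      push_cast; ring
    have hp : (∏ i ∈ Finset.Icc (r - (h + 1) + 1) r, (2 * (i : ℝ) + 1)) =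
        (2 * ((r : ℝ) - h) + 1) * ∏ i ∈ Finset.Icc (r - h + 1) r, (2 * (i : ℝ) + 1) := by
      rw [h1, show Finset.Icc (r - h) r = Finset.Ico (r - h) (r + 1) from
        (Finset.Ico_add_one_right_eq_Icc _ _).symm,
        Finset.prod_eq_prod_Ico_succ_bot (by omega : r - h < r + 1),
        Finset.Ico_add_one_right_eq_Icc, hcast]
    rw [hp, hq, show 2 * (h + 1) = 2 * h + 1 + 1 from by ring]
    have e1 := congrArg (Nat.cast : ℕ → ℝ) (Nat.choose_succ_right_eq r h)
    push_cast [Nat.cast_sub hh] at e1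
    have e2 := congrArg (Nat.cast : ℕ → ℝ) (Nat.choose_succ_right_eq (2 * r + 1) (2 * h))
    push_cast [Nat.cast_sub (by omega : 2 * h ≤ 2 * r + 1)] at e2
    have e3 := congrArg (Nat.cast : ℕ → ℝ) (Nat.choose_succ_right_eq (2 * r + 1) (2 * h + 1))
    push_cast [Nat.cast_sub (by omega : 2 * h + 1 ≤ 2 * r + 1), Nat.cast_sub (by omega : 2 * h ≤ 2 * r)] at e3
    set p := ∏ i ∈ Finset.Icc (r - h + 1) r, (2 * (i : ℝ) + 1) with hpdef
    set q := ∏ i ∈ Finset.Icc 1 h, (2 * (i : ℝ) - 1) with hqdef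
    set rh : ℝ := (r : ℝ) - h with hrhdef
    have hK : (((h : ℝ) + 1) * ((2 * (h : ℝ) + 1) * (2 * (h : ℝ) + 2))) ≠ 0 := by positivity
    apply mul_left_cancel₀ hK
    linear_combination ((2*(h:ℝ)+1)*(2*(h:ℝ)+2)*(2*rh+1)*p) * e1
      + (((h:ℝ)+1)*(2*(h:ℝ)+1)*(2*rh)*(2*rh+1)) * IH
      - (((h:ℝ)+1)*(2*(h:ℝ)+1)*(2*(h:ℝ)+1)*q) * e3
      - (((h:ℝ)+1)*(2*(h:ℝ)+1)*(2*rh)*q) * e2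

/-- **Lemma 6.** For positive integers `m, n, r` with `gcd(m,n) = 1` and
`m ≤ n/2`, and real `0 ≤ z ≤ 1`: `(1 + z)^r ≤ Y_{m,n,r}(z) ≤ (1 + z^{1/2})^{2r}`. -/
theorem hyperY_eval_bounds (m n r : ℕ) (hm : 0 < m) (hn : 0 < n) (hr : 0 < r)
    (hg : Nat.gcd m n = 1) (hmn : (m : ℝ) ≤ (n : ℝ) / 2)
    (z : ℝ) (hz0 : 0 ≤ z) (hz1 : z ≤ 1) :
    (1 + z) ^ r ≤ Polynomial.aeval z (hyperY m n r) ∧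
    Polynomial.aeval z (hyperY m n r) ≤ (1 + z ^ ((1 : ℝ) / 2)) ^ (2 * r) := by
  have hN : (0:ℝ) < n := by exact_mod_cast hn
  have hM : (1:ℝ) ≤ m := by exact_mod_cast hm
  have heval : (Polynomial.aeval z (hyperY m n r) : ℝ) =
      ∑ h ∈ Finset.range (r + 1),
        ((r.choose h : ℝ) * (∏ i ∈ Finset.Icc (r - h + 1) r, ((i : ℝ) * n + m)) /
          (∏ i ∈ Finset.Icc 1 h, ((i : ℝ) * n - m))) * z ^ h := by
    rw [hyperY, map_sum]
    refine Finset.sum_congr rfl fun h _ => ?_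
    rw [map_mul, map_pow, Polynomial.aeval_X, Polynomial.aeval_C, eq_ratCast]
    push_cast
    ring
  have hQpos : ∀ h : ℕ, (0:ℝ) < ∏ i ∈ Finset.Icc 1 h, ((i : ℝ) * n - m) := by
    intro h
    apply Finset.prod_pos
    intro i hi
    have : (1:ℝ) ≤ i := by exact_mod_cast (Finset.mem_Icc.mp hi).1
    nlinarith
  have hQleP : ∀ h, h ≤ r → (∏ i ∈ Finset.Icc 1 h, ((i : ℝ) * n - m)) ≤
      ∏ i ∈ Finset.Icc (r - h + 1) r, ((i : ℝ) * n + m) := by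
    intro h hhr
    rw [show Finset.Icc 1 h = Finset.Ico 1 (h+1) from (Finset.Ico_add_one_right_eq_Icc _ _).symm,
      show Finset.Icc (r-h+1) r = Finset.Ico (r-h+1) (r+1) from (Finset.Ico_add_one_right_eq_Icc _ _).symm,
      Finset.prod_Ico_eq_prod_range, Finset.prod_Ico_eq_prod_range,
      show h + 1 - 1 = h from rfl, show r + 1 - (r - h + 1) = h from by omega]
    apply Finset.prod_le_prod
    · intro i _
      have h1 : (1:ℝ) ≤ ((1 + i : ℕ) : ℝ) := by exact_mod_cast Nat.le_add_right 1 i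
      nlinarith
    · intro i _
      have h1 : (1:ℝ) ≤ ((1 + i : ℕ) : ℝ) := by exact_mod_cast Nat.le_add_right 1 i
      have h2 : ((1 + i : ℕ) : ℝ) ≤ ((r - h + 1 + i : ℕ) : ℝ) := by
        exact_mod_cast (by omega : (1 + i : ℕ) ≤ r - h + 1 + i)
      nlinarith
  have hlow : (1 + z) ^ r ≤ Polynomial.aeval z (hyperY m n r) := by
    rw [heval, add_comm, add_pow]
    simp only [one_pow, mul_one]
    apply Finset.sum_le_sum
    intro h hhmem
    have hhr : h ≤ r := by
      have := Finset.mem_range.mp hhmem; omega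
    have hQ := hQpos h
    rw [mul_comm (z ^ h)]
    apply mul_le_mul_of_nonneg_right _ (pow_nonneg hz0 h)
    rw [le_div_iff₀ hQ]
    exact mul_le_mul_of_nonneg_left (hQleP h hhr) (Nat.cast_nonneg _)
  refine ⟨hlow, ?_⟩
  set w := z ^ ((1:ℝ)/2) with hwdef
  have hw0 : 0 ≤ w := Real.rpow_nonneg hz0 _
  have hw1 : w ≤ 1 := Real.rpow_le_one hz0 hz1 (by norm_num)
  have hw2 : w ^ 2 = z := by
    rw [hwdef, ← Real.rpow_natCast (z ^ ((1:ℝ)/2)) 2, ← Real.rpow_mul hz0]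
    norm_num
  have hcoef : ∀ h, h ≤ r → (r.choose h : ℝ) * (∏ i ∈ Finset.Icc (r-h+1) r, ((i:ℝ)*n + m)) /
      (∏ i ∈ Finset.Icc 1 h, ((i:ℝ)*n - m)) ≤ ((2*r+1).choose (2*h) : ℝ) := by
    intro h hhr
    rw [div_le_iff₀ (hQpos h)]
    have hcard : (Finset.Icc (r-h+1) r).card = h := by rw [Nat.card_Icc]; omega
    have hcard2 : (Finset.Icc 1 h).card = h := by rw [Nat.card_Icc]; omega
    have hPle : (∏ i ∈ Finset.Icc (r-h+1) r, ((i:ℝ)*n + m)) ≤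
        ((n:ℝ)/2)^h * ∏ i ∈ Finset.Icc (r-h+1) r, (2*(i:ℝ)+1) := by
      have hrw : ∏ i ∈ Finset.Icc (r-h+1) r, ((n:ℝ)/2 * (2*(i:ℝ)+1)) =
          ((n:ℝ)/2)^h * ∏ i ∈ Finset.Icc (r-h+1) r, (2*(i:ℝ)+1) := by
        rw [Finset.prod_mul_distrib, Finset.prod_const, hcard]
      rw [← hrw]
      apply Finset.prod_le_prod
      · intro i _
        have : (0:ℝ) ≤ i := Nat.cast_nonneg i
        nlinarith
      · intro i _
        have : (0:ℝ) ≤ i := Nat.cast_nonneg i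
        nlinarith
    have hQge : ((n:ℝ)/2)^h * ∏ i ∈ Finset.Icc 1 h, (2*(i:ℝ)-1) ≤
        ∏ i ∈ Finset.Icc 1 h, ((i:ℝ)*n - m) := by
      have hrw : ∏ i ∈ Finset.Icc 1 h, ((n:ℝ)/2 * (2*(i:ℝ)-1)) =
          ((n:ℝ)/2)^h * ∏ i ∈ Finset.Icc 1 h, (2*(i:ℝ)-1) := by
        rw [Finset.prod_mul_distrib, Finset.prod_const, hcard2]
      rw [← hrw]
      apply Finset.prod_le_prod
      · intro i hi
        have : (1:ℝ) ≤ i := by exact_mod_cast (Finset.mem_Icc.mp hi).1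
        nlinarith
      · intro i hi
        have : (1:ℝ) ≤ i := by exact_mod_cast (Finset.mem_Icc.mp hi).1
        nlinarith
    calc (r.choose h : ℝ) * ∏ i ∈ Finset.Icc (r-h+1) r, ((i:ℝ)*n + m)
        ≤ (r.choose h : ℝ) * (((n:ℝ)/2)^h * ∏ i ∈ Finset.Icc (r-h+1) r, (2*(i:ℝ)+1)) :=
          mul_le_mul_of_nonneg_left hPle (Nat.cast_nonneg _)
      _ = ((n:ℝ)/2)^h * ((r.choose h : ℝ) * ∏ i ∈ Finset.Icc (r-h+1) r, (2*(i:ℝ)+1)) := by ring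
      _ = ((n:ℝ)/2)^h * (((2*r+1).choose (2*h) : ℝ) * ∏ i ∈ Finset.Icc 1 h, (2*(i:ℝ)-1)) := by
          rw [oddIdentity r h hhr]
      _ = ((2*r+1).choose (2*h) : ℝ) * (((n:ℝ)/2)^h * ∏ i ∈ Finset.Icc 1 h, (2*(i:ℝ)-1)) := by ring
      _ ≤ ((2*r+1).choose (2*h) : ℝ) * ∏ i ∈ Finset.Icc 1 h, ((i:ℝ)*n - m) :=
          mul_le_mul_of_nonneg_left hQge (Nat.cast_nonneg _)
  have hsum2 : ∑ h ∈ Finset.range (r+1), ((2*r+1).choose (2*h) : ℝ) * z ^ h ≤ (1 + w)^(2*r) := by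
    have hzw : ∀ h : ℕ, z ^ h = w ^ (2*h) := fun h => by rw [pow_mul, hw2]
    simp only [hzw]
    have hexp2 : (1 + w)^(2*r) = ∑ k ∈ Finset.range (2*(r+1)), w ^ k * ((2*r).choose k : ℝ) := by
      rw [show 2*(r+1) = (2*r+1)+1 from by ring, Finset.sum_range_succ, Nat.choose_succ_self,
        add_comm (1:ℝ) w, add_pow]
      simp
    rw [hexp2, pairSum (fun k => w ^ k * ((2*r).choose k : ℝ)) (r+1)]
    rw [Finset.sum_add_distrib]
    have hsplitS : ∑ h ∈ Finset.range (r+1), ((2*r+1).choose (2*h):ℝ) * w^(2*h)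
        = (∑ h ∈ Finset.range r, ((2*r+1).choose (2*(h+1)):ℝ) * w^(2*(h+1))) + 1 := by
      rw [Finset.sum_range_succ']
      norm_num
    have hsplitA : ∑ h ∈ Finset.range (r+1), w^(2*h) * ((2*r).choose (2*h):ℝ)
        = (∑ h ∈ Finset.range r, w^(2*(h+1)) * ((2*r).choose (2*(h+1)):ℝ)) + 1 := by
      rw [Finset.sum_range_succ']
      norm_num
    have hBo : ∑ h ∈ Finset.range r, w^(2*h+1) * ((2*r).choose (2*h+1):ℝ)
        ≤ ∑ h ∈ Finset.range (r+1), w^(2*h+1) * ((2*r).choose (2*h+1):ℝ) := by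
      rw [Finset.sum_range_succ]
      have : (0:ℝ) ≤ w^(2*r+1) * ((2*r).choose (2*r+1):ℝ) := by positivity
      linarith
    have hterm : ∑ h ∈ Finset.range r, ((2*r+1).choose (2*(h+1)):ℝ) * w^(2*(h+1))
        ≤ (∑ h ∈ Finset.range r, w^(2*(h+1)) * ((2*r).choose (2*(h+1)):ℝ))
          + ∑ h ∈ Finset.range r, w^(2*h+1) * ((2*r).choose (2*h+1):ℝ) := by
      rw [← Finset.sum_add_distrib]
      apply Finset.sum_le_sum
      intro h _
      have hps : (2*r+1).choose (2*(h+1)) = (2*r).choose (2*h+1) + (2*r).choose (2*(h+1)) := by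
        rw [show 2*(h+1) = (2*h+1)+1 from by ring]
        exact Nat.choose_succ_succ (2*r) (2*h+1)
      rw [hps]
      push_cast
      have hwle : w^(2*(h+1)) ≤ w^(2*h+1) := pow_le_pow_of_le_one hw0 hw1 (by omega)
      have c1 : (0:ℝ) ≤ ((2*r).choose (2*h+1) : ℝ) := Nat.cast_nonneg _
      have c2 := mul_le_mul_of_nonneg_left hwle c1
      linarith
    linarith [hsplitS, hsplitA, hBo, hterm]
  rw [heval]
  calc ∑ h ∈ Finset.range (r + 1),
        ((r.choose h : ℝ) * (∏ i ∈ Finset.Icc (r - h + 1) r, ((i : ℝ) * n + m)) /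
          (∏ i ∈ Finset.Icc 1 h, ((i : ℝ) * n - m))) * z ^ h
      ≤ ∑ h ∈ Finset.range (r+1), ((2*r+1).choose (2*h) : ℝ) * z ^ h := by
        apply Finset.sum_le_sum
        intro h hhmem
        have hhr : h ≤ r := by have := Finset.mem_range.mp hhmem; omega
        exact mul_le_mul_of_nonneg_right (hcoef h hhr) (pow_nonneg hz0 h)
    _ ≤ (1 + w)^(2*r) := hsum2
end
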